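/- arXiv:1108.3147 — 5 statements merged into one kernel-verified Lean document; each statement's English description precedes it below -/
import Mathlib

section
/- Let A and B be n×n real symmetric matrices. Then the bounded Lipschitz distance between their empirical spectral distributions satisfies d_BL²(F^A, F^B) ≤ (1/n) Tr((A − B)²). -/
open MeasureTheory Filter Finset ProbabilityTheory Topology
open scoped Classical ENNReal NNReal

noncomputable section

/-- Empirical spectral distribution of a real `n × n` matrix `A`; defined as the uniform
probability measure on the eigenvalues when `A` is symmetric (Hermitian), `0` otherwise. -/
noncomputable def ESD {n : ℕ} (A : Matrix (Fin n) (Fin n) ℝ) : Measure ℝ :=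
  if hA : A.IsHermitian then
    ((n : ℝ≥0∞))⁻¹ • ∑ i : Fin n, Measure.dirac (hA.eigenvalues i)
  else 0

/-- Weak convergence of a sequence of measures on `ℝ`, tested against bounded
continuous functions. -/
def WeakLim (μ : ℕ → Measure ℝ) (ν : Measure ℝ) : Prop :=
  ∀ f : BoundedContinuousFunction ℝ ℝ,
    Tendsto (fun n => ∫ x, f x ∂(μ n)) atTop (𝓝 (∫ x, f x ∂ν))

/-- The bounded Lipschitz metric on measures on `ℝ`. -/
noncomputable def dBL (μ ν : Measure ℝ) : ℝ :=
  sSup { r : ℝ | ∃ f : ℝ → ℝ, (∀ x, |f x| ≤ 1) ∧ LipschitzWith 1 f ∧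
    r = |(∫ x, f x ∂μ) - (∫ x, f x ∂ν)| }

/-- The sample autocovariance `γ̂_Y(k) = n⁻¹ ∑_{i=1}^{n-|k|} Y_i Y_{i+|k|}`. -/
noncomputable def sampleACV (Y : ℤ → ℝ) (n : ℕ) (k : ℤ) : ℝ :=
  (n : ℝ)⁻¹ * ∑ i ∈ Finset.Icc (1 : ℤ) ((n : ℤ) - |k|), Y i * Y (i + |k|)

/-- The sample autocovariance matrix `Γ_n(Y) = ((γ̂_Y(i-j)))`. -/
noncomputable def sampleACVM (Y : ℤ → ℝ) (n : ℕ) : Matrix (Fin n) (Fin n) ℝ :=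
  Matrix.of fun i j => sampleACV Y n (((i : ℕ) : ℤ) - ((j : ℕ) : ℤ))

/-- The modified sample autocovariance `γ*_Y(k) = n⁻¹ ∑_{i=1}^{n} Y_i Y_{i+|k|}`. -/
noncomputable def sampleACVstar (Y : ℤ → ℝ) (n : ℕ) (k : ℤ) : ℝ :=
  (n : ℝ)⁻¹ * ∑ i ∈ Finset.Icc (1 : ℤ) (n : ℤ), Y i * Y (i + |k|)

/-- The modified sample autocovariance matrix `Γ*_n(Y) = ((γ*_Y(|i-j|)))`. -/
noncomputable def sampleACVMstar (Y : ℤ → ℝ) (n : ℕ) : Matrix (Fin n) (Fin n) ℝ :=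
  Matrix.of fun i j => sampleACVstar Y n (((i : ℕ) : ℤ) - ((j : ℕ) : ℤ))

/-- The Type I banded sample ACVM: entries with `|i - j| ≥ m` are replaced by `0`. -/
noncomputable def bandACVM (Y : ℤ → ℝ) (n m : ℕ) : Matrix (Fin n) (Fin n) ℝ :=
  Matrix.of fun i j =>
    if |((i : ℕ) : ℤ) - ((j : ℕ) : ℤ)| < (m : ℤ) then
      sampleACV Y n (((i : ℕ) : ℤ) - ((j : ℕ) : ℤ)) else 0

/-- The Type II banded sample ACVM: the `m × m` principal submatrix of `Γ_n(Y)`. -/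
noncomputable def subACVM (Y : ℤ → ℝ) (n m : ℕ) : Matrix (Fin m) (Fin m) ℝ :=
  Matrix.of fun i j => sampleACV Y n (((i : ℕ) : ℤ) - ((j : ℕ) : ℤ))

/-- The tapered sample ACVM `Γ_{n,K}(Y) = ((K((i-j)/m) γ̂_Y(i-j)))`. -/
noncomputable def taperACVM (K : ℝ → ℝ) (Y : ℤ → ℝ) (n m : ℕ) : Matrix (Fin n) (Fin n) ℝ :=
  Matrix.of fun i j =>
    K (((((i : ℕ) : ℤ) - ((j : ℕ) : ℤ) : ℤ) : ℝ) / (m : ℝ)) *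
      sampleACV Y n (((i : ℕ) : ℤ) - ((j : ℕ) : ℤ))

/-- The MA(d) process `X_{t,d} = ∑_{k=0}^{d} θ_k ε_{t-k}`. -/
noncomputable def MAfin {Ω : Type*} (θ : ℕ → ℝ) (d : ℕ) (ε : ℤ → Ω → ℝ) (ω : Ω) (t : ℤ) : ℝ :=
  ∑ k ∈ Finset.range (d + 1), θ k * ε (t - (k : ℤ)) ω

/-- The MA(∞) process `X_t = ∑_{k=0}^{∞} θ_k ε_{t-k}`. -/
noncomputable def MAinf {Ω : Type*} (θ : ℕ → ℝ) (ε : ℤ → Ω → ℝ) (ω : Ω) (t : ℤ) : ℝ :=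
  ∑' k : ℕ, θ k * ε (t - (k : ℤ)) ω

/-- Assumption A(a): `{ε_t}` are i.i.d. with mean `0` and variance `1`. -/
def AssumptionAa {Ω : Type*} [MeasureSpace Ω] (ε : ℤ → Ω → ℝ) : Prop :=
  IsProbabilityMeasure (ℙ : Measure Ω) ∧ (∀ t, Measurable (ε t)) ∧
  iIndepFun ε ℙ ∧
  (∀ t, Measure.map (ε t) ℙ = Measure.map (ε 0) ℙ) ∧
  (∀ t, (∫ ω, ε t ω) = 0) ∧ (∀ t, (∫ ω, (ε t ω) ^ 2) = 1)

/-- Assumption A(b): `{ε_t}` are independent, uniformly bounded, with mean `0` and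
variance `1`. -/
def AssumptionAb {Ω : Type*} [MeasureSpace Ω] (ε : ℤ → Ω → ℝ) : Prop :=
  IsProbabilityMeasure (ℙ : Measure Ω) ∧ (∀ t, Measurable (ε t)) ∧
  iIndepFun ε ℙ ∧
  (∃ C : ℝ, ∀ t ω, |ε t ω| ≤ C) ∧
  (∀ t, (∫ ω, ε t ω) = 0) ∧ (∀ t, (∫ ω, (ε t ω) ^ 2) = 1)

/-- The ACVF of the MA(d) process: `γ_{X^{(d)}}(j) = ∑_{k=0}^{d-j} θ_k θ_{j+k}`. -/
noncomputable def gammaFin (θ : ℕ → ℝ) (d j : ℕ) : ℝ :=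
  if j ≤ d then ∑ k ∈ Finset.range (d - j + 1), θ k * θ (j + k) else 0

/-- The ACVF of the MA(∞) process: `γ_X(j) = ∑_{k=0}^{∞} θ_k θ_{j+k}`. -/
noncomputable def gammaInf (θ : ℕ → ℝ) (j : ℕ) : ℝ :=
  ∑' k : ℕ, θ k * θ (j + k)

/-- The spectral density of the MA(∞) process:
`f_X(t) = ∑_{k=-∞}^{∞} exp(-2πitk) γ_X(|k|) = γ_X(0) + 2 ∑_{k≥1} cos(2πtk) γ_X(k)`. -/
noncomputable def specDensityInf (θ : ℕ → ℝ) (t : ℝ) : ℝ :=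
  gammaInf θ 0 + 2 * ∑' k : ℕ, Real.cos (2 * Real.pi * t * ((k : ℝ) + 1)) * gammaInf θ (k + 1)

/-- The spectral density of the MA(d) process. -/
noncomputable def specDensityFin (θ : ℕ → ℝ) (d : ℕ) (t : ℝ) : ℝ :=
  gammaFin θ d 0 + 2 * ∑ k ∈ Finset.Icc 1 d, Real.cos (2 * Real.pi * t * (k : ℝ)) * gammaFin θ d k

/-- The law of `f(U)` where `U` is uniform on `(0, 1]`. -/
noncomputable def specLaw (f : ℝ → ℝ) : Measure ℝ :=
  Measure.map f (MeasureTheory.volume.restrict (Set.Ioc (0 : ℝ) 1))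

/-- `a` is d-matched: every coordinate is within `d` of some other coordinate. -/
def dMatched (d : ℕ) {h : ℕ} (a : Fin (2 * h) → ℕ) : Prop :=
  ∀ i, ∃ j, j ≠ i ∧ |(a i : ℤ) - (a j : ℤ)| ≤ (d : ℤ)

/-- `a` is minimal d-matched: there is a partition of the index set into pairs
(a fixed-point-free involution) such that `|a_x - a_y| ≤ d` holds exactly on pairs. -/
def minimalMatched (d : ℕ) {h : ℕ} (a : Fin (2 * h) → ℕ) : Prop :=
  ∃ σ : Equiv.Perm (Fin (2 * h)), (∀ x, σ x ≠ x) ∧ (∀ x, σ (σ x) = x) ∧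
    ∀ x y, x ≠ y → (|(a x : ℤ) - (a y : ℤ)| ≤ (d : ℤ) ↔ σ x = y)


section AuxDBL

variable {n : ℕ}

private lemma esd_integral_aux {n : ℕ} (A : Matrix (Fin n) (Fin n) ℝ) (hA : A.IsHermitian)
    (f : ℝ → ℝ) (hf : Continuous f) (hb : ∀ x, |f x| ≤ 1) :
    ∫ x, f x ∂(ESD A) = (n : ℝ)⁻¹ * ∑ i, f (hA.eigenvalues i) := by
  rw [ESD, dif_pos hA, integral_smul_measure, integral_finset_sum_measure]
  · simp [integral_dirac, ENNReal.toReal_inv, smul_eq_mul]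
  · intro i _
    exact (integrable_const (1 : ℝ)).mono' hf.aestronglyMeasurable
      (Filter.Eventually.of_forall fun x => by simpa using hb x)

private lemma trace_prod_aux (U V : Matrix (Fin n) (Fin n) ℝ) (lam mu : Fin n → ℝ) :
    Matrix.trace ((U * Matrix.diagonal lam * star U) * (V * Matrix.diagonal mu * star V))
      = ∑ i, ∑ j, lam i * mu j * ((star U * V) i j)^2 := by
  have h1 : (U * Matrix.diagonal lam * star U) * (V * Matrix.diagonal mu * star V)
      = U * (Matrix.diagonal lam * (star U * (V * (Matrix.diagonal mu * star V)))) := by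
    simp only [Matrix.mul_assoc]
  rw [h1, Matrix.trace_mul_comm]
  have h2 : (Matrix.diagonal lam * (star U * (V * (Matrix.diagonal mu * star V)))) * U
      = (Matrix.diagonal lam * (star U * V)) * (Matrix.diagonal mu * star (star U * V)) := by
    simp only [Matrix.mul_assoc, star_mul, star_star]
  rw [h2]
  simp only [Matrix.trace, Matrix.diag]
  refine Finset.sum_congr rfl fun i _ => ?_
  rw [Matrix.mul_apply]
  refine Finset.sum_congr rfl fun j _ => ?_
  rw [Matrix.diagonal_mul, Matrix.diagonal_mul]
  have : (star (star U * V)) j i = (star U * V) i j := by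
    simp [Matrix.star_apply]
  rw [this]; ring

private lemma row_sq_sum_aux (W : Matrix (Fin n) (Fin n) ℝ) (h : W * star W = 1) (i : Fin n) :
    ∑ j, (W i j)^2 = 1 := by
  have := congrArg (fun M : Matrix (Fin n) (Fin n) ℝ => M i i) h
  simpa [Matrix.mul_apply, Matrix.star_apply, sq] using this

private lemma col_sq_sum_aux (W : Matrix (Fin n) (Fin n) ℝ) (h : star W * W = 1) (j : Fin n) :
    ∑ i, (W i j)^2 = 1 := by
  have := congrArg (fun M : Matrix (Fin n) (Fin n) ℝ => M j j) h
  simpa [Matrix.mul_apply, Matrix.star_apply, sq] using this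

private lemma spec_decomp_aux (A : Matrix (Fin n) (Fin n) ℝ) (hA : A.IsHermitian) :
    A = (Matrix.IsHermitian.eigenvectorUnitary hA : Matrix (Fin n) (Fin n) ℝ)
    * Matrix.diagonal hA.eigenvalues
    * star (Matrix.IsHermitian.eigenvectorUnitary hA : Matrix (Fin n) (Fin n) ℝ) := by
  simpa [Function.comp] using hA.spectral_theorem

private lemma trace_sub_sq_aux (A B : Matrix (Fin n) (Fin n) ℝ)
    (hA : A.IsHermitian) (hB : B.IsHermitian) :
    ∃ w : Fin n → Fin n → ℝ, (∀ i j, 0 ≤ w i j) ∧ (∀ i, ∑ j, w i j = 1) ∧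
      (∀ j, ∑ i, w i j = 1) ∧
      Matrix.trace ((A - B) * (A - B))
        = ∑ i, ∑ j, w i j * (hA.eigenvalues i - hB.eigenvalues j)^2 := by
  set U := (Matrix.IsHermitian.eigenvectorUnitary hA : Matrix (Fin n) (Fin n) ℝ) with hUdef
  set V := (Matrix.IsHermitian.eigenvectorUnitary hB : Matrix (Fin n) (Fin n) ℝ) with hVdef
  have hU1 : star U * U = 1 := Unitary.coe_star_mul_self _
  have hU2 : U * star U = 1 := Unitary.coe_mul_star_self _
  have hV1 : star V * V = 1 := Unitary.coe_star_mul_self _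
  have hV2 : V * star V = 1 := Unitary.coe_mul_star_self _
  set W := star U * V with hWdef
  set lam := hA.eigenvalues
  set mu := hB.eigenvalues
  have hrow : ∀ i, ∑ j, (W i j)^2 = 1 := by
    refine row_sq_sum_aux W ?_
    calc W * star W = star U * (V * star V) * U := by
          simp only [hWdef, star_mul, star_star, Matrix.mul_assoc]
      _ = 1 := by rw [hV2, Matrix.mul_one, hU1]
  have hcol : ∀ j, ∑ i, (W i j)^2 = 1 := by
    refine col_sq_sum_aux W ?_
    calc star W * W = star V * (U * star U) * V := by
          simp only [hWdef, star_mul, star_star, Matrix.mul_assoc]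
      _ = 1 := by rw [hU2, Matrix.mul_one, hV1]
  refine ⟨fun i j => (W i j)^2, fun i j => sq_nonneg _, hrow, hcol, ?_⟩
  · have expand : (A - B) * (A - B) = A * A - A * B - B * A + B * B := by
      noncomm_ring
    have hAB : Matrix.trace (A * B) = ∑ i, ∑ j, lam i * mu j * (W i j)^2 := by
      conv_lhs => rw [spec_decomp_aux A hA, spec_decomp_aux B hB]
      exact trace_prod_aux U V lam mu
    have hAA : Matrix.trace (A * A) = ∑ i, (lam i)^2 := by
      conv_lhs => rw [spec_decomp_aux A hA]
      rw [trace_prod_aux U U lam lam]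
      refine Finset.sum_congr rfl fun i _ => ?_
      rw [hU1]
      simp [Matrix.one_apply, sq, Finset.mul_sum]
    have hBB : Matrix.trace (B * B) = ∑ j, (mu j)^2 := by
      conv_lhs => rw [spec_decomp_aux B hB]
      rw [trace_prod_aux V V mu mu]
      refine Finset.sum_congr rfl fun i _ => ?_
      rw [hV1]
      simp [Matrix.one_apply, sq, Finset.mul_sum]
    have hBA : Matrix.trace (B * A) = Matrix.trace (A * B) := Matrix.trace_mul_comm B A
    rw [expand, Matrix.trace_add, Matrix.trace_sub, Matrix.trace_sub, hAA, hAB, hBA, hAB, hBB]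
    have rhs_expand : ∑ i, ∑ j, (W i j)^2 * (lam i - mu j)^2
        = ∑ i, (lam i)^2 - 2 * (∑ i, ∑ j, lam i * mu j * (W i j)^2) + ∑ j, (mu j)^2 := by
      have h1 : ∑ i, ∑ j, (W i j)^2 * (lam i - mu j)^2
          = (∑ i, ∑ j, (W i j)^2 * (lam i)^2) - 2 * (∑ i, ∑ j, lam i * mu j * (W i j)^2)
            + ∑ i, ∑ j, (W i j)^2 * (mu j)^2 := by
        simp only [Finset.mul_sum, ← Finset.sum_sub_distrib, ← Finset.sum_add_distrib]
        refine Finset.sum_congr rfl fun i _ => Finset.sum_congr rfl fun j _ => by ring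
      rw [h1]
      congr 1
      · congr 1
        refine Finset.sum_congr rfl fun i _ => ?_
        rw [← Finset.sum_mul, hrow i, one_mul]
      · rw [Finset.sum_comm]
        refine Finset.sum_congr rfl fun j _ => ?_
        rw [← Finset.sum_mul, hcol j, one_mul]
    rw [rhs_expand]
    ring

private lemma key_bound_aux (lam mu : Fin n → ℝ) (w : Fin n → Fin n → ℝ)
    (hw0 : ∀ i j, 0 ≤ w i j) (hrow : ∀ i, ∑ j, w i j = 1) (hcol : ∀ j, ∑ i, w i j = 1)
    (f : ℝ → ℝ) (hlip : LipschitzWith 1 f) (T : ℝ)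
    (hT : T = ∑ i, ∑ j, w i j * (lam i - mu j)^2) :
    |(n : ℝ)⁻¹ * ∑ i, f (lam i) - (n : ℝ)⁻¹ * ∑ j, f (mu j)|
      ≤ Real.sqrt ((1 / n) * T) := by
  have hTnn : 0 ≤ T := hT ▸ Finset.sum_nonneg fun i _ => Finset.sum_nonneg fun j _ =>
    mul_nonneg (hw0 i j) (sq_nonneg _)
  have hdiff : ∑ i, f (lam i) - ∑ j, f (mu j)
      = ∑ i, ∑ j, w i j * (f (lam i) - f (mu j)) := by
    have h1 : ∑ i, f (lam i) = ∑ i, ∑ j, w i j * f (lam i) := by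
      refine Finset.sum_congr rfl fun i _ => ?_
      rw [← Finset.sum_mul, hrow i, one_mul]
    have h2 : ∑ j, f (mu j) = ∑ i, ∑ j, w i j * f (mu j) := by
      rw [Finset.sum_comm]
      refine Finset.sum_congr rfl fun j _ => ?_
      rw [← Finset.sum_mul, hcol j, one_mul]
    rw [h1, h2, ← Finset.sum_sub_distrib]
    refine Finset.sum_congr rfl fun i _ => ?_
    rw [← Finset.sum_sub_distrib]
    exact Finset.sum_congr rfl fun j _ => by ring
  set A1 : ℝ := ∑ i, ∑ j, w i j * |lam i - mu j| with hA1
  have hA1nn : 0 ≤ A1 := Finset.sum_nonneg fun i _ => Finset.sum_nonneg fun j _ =>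
    mul_nonneg (hw0 i j) (abs_nonneg _)
  have step1 : |∑ i, f (lam i) - ∑ j, f (mu j)| ≤ A1 := by
    rw [hdiff]
    calc |∑ i, ∑ j, w i j * (f (lam i) - f (mu j))|
        ≤ ∑ i, |∑ j, w i j * (f (lam i) - f (mu j))| := Finset.abs_sum_le_sum_abs _ _
      _ ≤ ∑ i, ∑ j, |w i j * (f (lam i) - f (mu j))| :=
          Finset.sum_le_sum fun i _ => Finset.abs_sum_le_sum_abs _ _
      _ ≤ A1 := by
          refine Finset.sum_le_sum fun i _ => Finset.sum_le_sum fun j _ => ?_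
          rw [abs_mul, abs_of_nonneg (hw0 i j)]
          refine mul_le_mul_of_nonneg_left ?_ (hw0 i j)
          have := hlip.dist_le_mul (lam i) (mu j)
          simpa [Real.dist_eq] using this
  have step2 : A1 ^ 2 ≤ (n : ℝ) * T := by
    have hcs := Finset.sum_mul_sq_le_sq_mul_sq (Finset.univ : Finset (Fin n × Fin n))
      (fun p => Real.sqrt (w p.1 p.2)) (fun p => Real.sqrt (w p.1 p.2) * |lam p.1 - mu p.2|)
    have e1 : ∑ p : Fin n × Fin n, Real.sqrt (w p.1 p.2) *
        (Real.sqrt (w p.1 p.2) * |lam p.1 - mu p.2|) = A1 := by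
      rw [hA1, ← Finset.sum_product']
      refine Finset.sum_congr rfl fun p _ => ?_
      rw [← mul_assoc, Real.mul_self_sqrt (hw0 p.1 p.2)]
    have e2 : ∑ p : Fin n × Fin n, Real.sqrt (w p.1 p.2) ^ 2 = (n : ℝ) := by
      have : ∀ p : Fin n × Fin n, Real.sqrt (w p.1 p.2) ^ 2 = w p.1 p.2 :=
        fun p => Real.sq_sqrt (hw0 p.1 p.2)
      rw [Finset.sum_congr rfl fun p _ => this p, Fintype.sum_prod_type]
      simp only [hrow, Finset.sum_const, Finset.card_univ, Fintype.card_fin, nsmul_eq_mul,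
        mul_one]
    have e3 : ∑ p : Fin n × Fin n, (Real.sqrt (w p.1 p.2) * |lam p.1 - mu p.2|) ^ 2 = T := by
      rw [hT, ← Finset.sum_product']
      refine Finset.sum_congr rfl fun p _ => ?_
      rw [mul_pow, Real.sq_sqrt (hw0 p.1 p.2), sq_abs]
    rw [e1, e2, e3] at hcs
    exact hcs
  rw [← mul_sub, abs_mul, abs_of_nonneg (by positivity : (0:ℝ) ≤ (n:ℝ)⁻¹)]
  rw [Real.le_sqrt (by positivity) (by positivity)]
  have : ((n:ℝ)⁻¹ * |∑ i, f (lam i) - ∑ j, f (mu j)|) ^ 2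
      ≤ ((n:ℝ)⁻¹)^2 * ((n:ℝ) * T) := by
    rw [mul_pow]
    refine mul_le_mul_of_nonneg_left ?_ (by positivity)
    calc |∑ i, f (lam i) - ∑ j, f (mu j)| ^ 2 ≤ A1 ^ 2 := by
          refine pow_le_pow_left₀ (abs_nonneg _) step1 2
      _ ≤ (n : ℝ) * T := step2
  refine this.trans ?_
  rcases Nat.eq_zero_or_pos n with h | h
  · subst h; simp
  · have hn : (n : ℝ) ≠ 0 := Nat.cast_ne_zero.mpr h.ne'
    apply le_of_eq
    field_simp

end AuxDBL

/-- Lemma 1(a): for `n × n` real symmetric matrices `A`, `B`,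
`d_BL²(F^A, F^B) ≤ (1/n) Tr((A - B)²)`. -/
theorem dBL_sq_le_trace_sq (n : ℕ) (A B : Matrix (Fin n) (Fin n) ℝ)
    (hA : A.IsHermitian) (hB : B.IsHermitian) :
    dBL (ESD A) (ESD B) ^ 2 ≤ (1 / (n : ℝ)) * Matrix.trace ((A - B) * (A - B)) := by
  obtain ⟨w, hw0, hrow, hcol, hT⟩ := trace_sub_sq_aux A B hA hB
  set T := Matrix.trace ((A - B) * (A - B)) with hTdef
  have hTnn : 0 ≤ T := hT ▸ Finset.sum_nonneg fun i _ => Finset.sum_nonneg fun j _ =>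
    mul_nonneg (hw0 i j) (sq_nonneg _)
  set s := Real.sqrt ((1 / (n : ℝ)) * T) with hs
  have hub : ∀ r ∈ { r : ℝ | ∃ f : ℝ → ℝ, (∀ x, |f x| ≤ 1) ∧ LipschitzWith 1 f ∧
      r = |(∫ x, f x ∂(ESD A)) - (∫ x, f x ∂(ESD B))| }, r ≤ s := by
    rintro r ⟨f, hb, hlip, rfl⟩
    rw [esd_integral_aux A hA f hlip.continuous hb, esd_integral_aux B hB f hlip.continuous hb]
    exact key_bound_aux _ _ w hw0 hrow hcol f hlip T hT
  have hmem : (0 : ℝ) ∈ { r : ℝ | ∃ f : ℝ → ℝ, (∀ x, |f x| ≤ 1) ∧ LipschitzWith 1 f ∧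
      r = |(∫ x, f x ∂(ESD A)) - (∫ x, f x ∂(ESD B))| } := by
    refine ⟨fun _ => 0, fun x => by simp, (LipschitzWith.const (0 : ℝ)).weaken zero_le_one, ?_⟩
    simp
  rw [dBL]
  have h1 : sSup { r : ℝ | ∃ f : ℝ → ℝ, (∀ x, |f x| ≤ 1) ∧ LipschitzWith 1 f ∧
      r = |(∫ x, f x ∂(ESD A)) - (∫ x, f x ∂(ESD B))| } ≤ s :=
    Real.sSup_le hub (Real.sqrt_nonneg _)
  have h0 : 0 ≤ sSup { r : ℝ | ∃ f : ℝ → ℝ, (∀ x, |f x| ≤ 1) ∧ LipschitzWith 1 f ∧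
      r = |(∫ x, f x ∂(ESD A)) - (∫ x, f x ∂(ESD B))| } :=
    le_csSup ⟨s, hub⟩ hmem
  calc sSup { r : ℝ | ∃ f : ℝ → ℝ, (∀ x, |f x| ≤ 1) ∧ LipschitzWith 1 f ∧
      r = |(∫ x, f x ∂(ESD A)) - (∫ x, f x ∂(ESD B))| } ^ 2 ≤ s ^ 2 :=
        pow_le_pow_left₀ h0 h1 2
    _ = (1 / (n : ℝ)) * T := Real.sq_sqrt (mul_nonneg (by positivity) hTnn)
end
end

section
/- Let A and B be p×n real matrices and set X = AAᵀ and Y = BBᵀ. Then the bounded Lipschitz distance between the empirical spectral distributions of X and Y satisfies d_BL²(F^X, F^Y) ≤ (2/p²) Tr(X + Y) · Tr((A − B)(A − B)ᵀ). -/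
open MeasureTheory Filter Finset ProbabilityTheory Topology
open scoped Classical ENNReal NNReal

noncomputable section

section AuxDBLProofs
open Matrix

lemma aux_trace_mmT (pp nn : ℕ) (M : Matrix (Fin pp) (Fin nn) ℝ) :
    (M * M.transpose).trace = ∑ i, ∑ j, (M i j)^2 := by
  simp [Matrix.trace, Matrix.diag, Matrix.mul_apply, sq]

lemma aux_trace_mmT_nonneg (pp nn : ℕ) (M : Matrix (Fin pp) (Fin nn) ℝ) :
    0 ≤ (M * M.transpose).trace := by
  rw [aux_trace_mmT]
  exact Finset.sum_nonneg fun i _ => Finset.sum_nonneg fun j _ => sq_nonneg _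

lemma aux_bessel {nn : ℕ} {ι : Type*} (s : Finset ι) (v : ι → Fin nn → ℝ) (u : Fin nn → ℝ)
    (horth : ∀ i ∈ s, ∀ j ∈ s, (∑ k, v i k * v j k) = if i = j then 1 else 0)
    (hu : (∑ k, u k * u k) = 1) :
    ∑ j ∈ s, (∑ k, u k * v j k)^2 ≤ 1 := by
  set c : ι → ℝ := fun j => ∑ k, u k * v j k with hc
  set w : Fin nn → ℝ := fun k => ∑ j ∈ s, c j * v j k with hw
  have h0 : 0 ≤ ∑ k, (u k - w k)^2 := Finset.sum_nonneg fun k _ => sq_nonneg _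
  have expand : ∑ k, (u k - w k)^2
      = (∑ k, u k * u k) - 2 * (∑ k, u k * w k) + ∑ k, w k * w k := by
    have h1 : ∀ k : Fin nn, (u k - w k)^2
        = u k * u k - 2 * (u k * w k) + w k * w k := fun k => by ring
    simp_rw [h1]
    rw [Finset.sum_add_distrib, Finset.sum_sub_distrib, ← Finset.mul_sum]
  have huw : ∑ k, u k * w k = ∑ j ∈ s, c j * c j := by
    simp only [hw, Finset.mul_sum]
    rw [Finset.sum_comm]
    refine Finset.sum_congr rfl fun j _ => ?_
    calc ∑ k, u k * (c j * v j k) = c j * ∑ k, u k * v j k := by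
          rw [Finset.mul_sum]; exact Finset.sum_congr rfl fun k _ => by ring
      _ = c j * c j := rfl
  have hww : ∑ k, w k * w k = ∑ j ∈ s, c j * c j := by
    have h2 : ∀ k : Fin nn, w k * w k = ∑ j ∈ s, ∑ l ∈ s, (c j * v j k) * (c l * v l k) := by
      intro k
      rw [hw]
      exact Finset.sum_mul_sum s s _ _
    simp_rw [h2]
    rw [Finset.sum_comm]
    refine Finset.sum_congr rfl fun j hj => ?_
    rw [Finset.sum_comm]
    have h3 : ∀ l ∈ s, (∑ k, (c j * v j k) * (c l * v l k)) = if j = l then c j * c j else 0 := by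
      intro l hl
      have : ∑ k, (c j * v j k) * (c l * v l k) = (c j * c l) * ∑ k, v j k * v l k := by
        rw [Finset.mul_sum]; exact Finset.sum_congr rfl fun k _ => by ring
      rw [this, horth j hj l hl]
      split <;> rename_i h <;> simp [h]
    rw [Finset.sum_congr rfl h3, Finset.sum_ite_eq s j (fun _ => c j * c j)]
    simp [hj]
  rw [expand, huw, hww, hu] at h0
  have hfin : ∑ j ∈ s, (∑ k, u k * v j k)^2 = ∑ j ∈ s, c j * c j := by
    exact Finset.sum_congr rfl fun j _ => by rw [sq]
  rw [hfin]
  linarith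

lemma aux_complete {pp : ℕ} (e : Matrix (Fin pp) (Fin pp) ℝ) (h0 : ∀ i j, 0 ≤ e i j)
    (hrow : ∀ i, ∑ j, e i j ≤ 1) (hcol : ∀ j, ∑ i, e i j ≤ 1) :
    ∃ D ∈ doublyStochastic ℝ (Fin pp), ∀ i j, e i j ≤ D i j := by
  set t : ℝ := ∑ i, (1 - ∑ j, e i j) with ht
  have htcol : t = ∑ j, (1 - ∑ i, e i j) := by
    rw [ht, Finset.sum_sub_distrib, Finset.sum_sub_distrib, Finset.sum_comm]
  have ht0 : 0 ≤ t := Finset.sum_nonneg fun i _ => by linarith [hrow i]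
  rcases eq_or_lt_of_le ht0 with h | h
  · refine ⟨e, ?_, fun i j => le_refl _⟩
    rw [mem_doublyStochastic_iff_sum]
    refine ⟨h0, fun i => ?_, fun j => ?_⟩
    · have h1 := (Finset.sum_eq_zero_iff_of_nonneg
        (fun i _ => by linarith [hrow i] : ∀ i ∈ Finset.univ, (0:ℝ) ≤ 1 - ∑ j, e i j)).1 h.symm
      have := h1 i (Finset.mem_univ i)
      linarith
    · have hz : ∑ j, (1 - ∑ i, e i j) = 0 := by rw [← htcol, ← h]
      have h1 := (Finset.sum_eq_zero_iff_of_nonneg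
        (fun j _ => by linarith [hcol j] : ∀ j ∈ Finset.univ, (0:ℝ) ≤ 1 - ∑ i, e i j)).1 hz
      have := h1 j (Finset.mem_univ j)
      linarith
  · refine ⟨Matrix.of fun i j => e i j + (1 - ∑ j', e i j') * (1 - ∑ i', e i' j) / t, ?_, ?_⟩
    · rw [mem_doublyStochastic_iff_sum]
      refine ⟨fun i j => ?_, fun i => ?_, fun j => ?_⟩
      · have h1 : 0 ≤ 1 - ∑ j', e i j' := by linarith [hrow i]
        have h2 : 0 ≤ 1 - ∑ i', e i' j := by linarith [hcol j]
        have h3 := div_nonneg (mul_nonneg h1 h2) ht0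
        exact add_nonneg (h0 i j) h3
      · simp only [Matrix.of_apply]
        rw [Finset.sum_add_distrib]
        have : ∑ j, (1 - ∑ j', e i j') * (1 - ∑ i', e i' j) / t
            = (1 - ∑ j', e i j') * (∑ j, (1 - ∑ i', e i' j)) / t := by
          rw [Finset.mul_sum, Finset.sum_div]
        rw [this, ← htcol, mul_div_assoc, div_self h.ne', mul_one]
        ring
      · simp only [Matrix.of_apply]
        rw [Finset.sum_add_distrib]
        have : ∑ i, (1 - ∑ j', e i j') * (1 - ∑ i', e i' j) / t
            = (∑ i, (1 - ∑ j', e i j')) * (1 - ∑ i', e i' j) / t := by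
          rw [Finset.sum_mul, Finset.sum_div]
        rw [this, ← ht, mul_comm, mul_div_assoc, div_self h.ne', mul_one]
        ring
    · intro i j
      simp only [Matrix.of_apply]
      have h1 : 0 ≤ 1 - ∑ j', e i j' := by linarith [hrow i]
      have h2 : 0 ≤ 1 - ∑ i', e i' j := by linarith [hcol j]
      have h3 : 0 ≤ (1 - ∑ j', e i j') * (1 - ∑ i', e i' j) / t :=
        div_nonneg (mul_nonneg h1 h2) ht0
      linarith

lemma aux_perm_bound {pp : ℕ} (x y : Fin pp → ℝ)
    {D : Matrix (Fin pp) (Fin pp) ℝ} (hD : D ∈ doublyStochastic ℝ (Fin pp)) :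
    ∃ σ : Equiv.Perm (Fin pp), (∑ i, ∑ j, x i * y j * D i j) ≤ ∑ i, x i * y (σ i) := by
  obtain ⟨w, hw0, hw1, hwD⟩ := exists_eq_sum_perm_of_mem_doublyStochastic hD
  obtain ⟨σ₀, -, hσ₀⟩ := Finset.exists_max_image Finset.univ
    (fun σ : Equiv.Perm (Fin pp) => ∑ i, x i * y (σ i)) ⟨1, Finset.mem_univ 1⟩
  refine ⟨σ₀, ?_⟩
  have hDij : ∀ i j, D i j = ∑ σ : Equiv.Perm (Fin pp), if σ i = j then w σ else 0 := by
    intro i j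
    rw [← hwD]
    simp [Matrix.sum_apply, Matrix.smul_apply, PEquiv.toMatrix_apply, Equiv.toPEquiv_apply,
      Option.mem_def, mul_ite, smul_eq_mul]
  calc ∑ i, ∑ j, x i * y j * D i j
      = ∑ σ : Equiv.Perm (Fin pp), w σ * (∑ i, x i * y (σ i)) := by
        simp_rw [hDij, Finset.mul_sum, mul_ite, mul_zero]
        have hswap : ∀ i : Fin pp, (∑ j, ∑ σ : Equiv.Perm (Fin pp),
            if σ i = j then x i * y j * w σ else 0)
            = ∑ σ : Equiv.Perm (Fin pp), ∑ j, if σ i = j then x i * y j * w σ else 0 :=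
          fun i => Finset.sum_comm
        simp_rw [hswap]
        rw [Finset.sum_comm]
        refine Finset.sum_congr rfl fun σ _ => ?_
        refine Finset.sum_congr rfl fun i _ => ?_
        rw [Finset.sum_ite_eq Finset.univ (σ i) (fun j => x i * y j * w σ)]
        simp [mul_comm, mul_assoc, mul_left_comm]
    _ ≤ ∑ σ : Equiv.Perm (Fin pp), w σ * (∑ i, x i * y (σ₀ i)) := by
        refine Finset.sum_le_sum fun σ _ => mul_le_mul_of_nonneg_left
          (hσ₀ σ (Finset.mem_univ σ)) (hw0 σ)
    _ = ∑ i, x i * y (σ₀ i) := by rw [← Finset.sum_mul, hw1, one_mul]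

-- orthonormal rows helper
lemma aux_diag_rows {pp nn : ℕ} {M : Matrix (Fin pp) (Fin nn) ℝ} {d : Fin pp → ℝ}
    (h : M * M.transpose = Matrix.diagonal d) :
    ∀ i j, (∑ k, M i k * M j k) = if i = j then d i else 0 := by
  intro i j
  have := congrFun (congrFun h i) j
  rw [Matrix.mul_apply] at this
  simp only [Matrix.transpose_apply] at this
  rw [this, Matrix.diagonal_apply]

lemma aux_vonNeumann {pp nn : ℕ} (A B : Matrix (Fin pp) (Fin nn) ℝ)
    (hX : (A * A.transpose).IsHermitian) (hY : (B * B.transpose).IsHermitian) :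
    ∃ σ : Equiv.Perm (Fin pp),
      (A * B.transpose).trace ≤
        ∑ i, Real.sqrt (hX.eigenvalues i) * Real.sqrt (hY.eigenvalues (σ i)) := by
  classical
  set lam := hX.eigenvalues with hlam
  set mu := hY.eigenvalues with hmu
  set U : Matrix (Fin pp) (Fin pp) ℝ := (hX.eigenvectorUnitary : Matrix (Fin pp) (Fin pp) ℝ)
    with hU
  set V : Matrix (Fin pp) (Fin pp) ℝ := (hY.eigenvectorUnitary : Matrix (Fin pp) (Fin pp) ℝ)
    with hV
  have hstarU : star U = U.transpose := by
    rw [Matrix.star_eq_conjTranspose, Matrix.conjTranspose_eq_transpose_of_trivial]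
  have hstarV : star V = V.transpose := by
    rw [Matrix.star_eq_conjTranspose, Matrix.conjTranspose_eq_transpose_of_trivial]
  have hUtU : U.transpose * U = 1 := by
    rw [← hstarU]; exact (Matrix.mem_unitaryGroup_iff'.mp hX.eigenvectorUnitary.2)
  have hUUt : U * U.transpose = 1 := by
    rw [← hstarU]; exact (Matrix.mem_unitaryGroup_iff.mp hX.eigenvectorUnitary.2)
  have hVtV : V.transpose * V = 1 := by
    rw [← hstarV]; exact (Matrix.mem_unitaryGroup_iff'.mp hY.eigenvectorUnitary.2)
  have hVVt : V * V.transpose = 1 := by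
    rw [← hstarV]; exact (Matrix.mem_unitaryGroup_iff.mp hY.eigenvectorUnitary.2)
  have hXdiag : U.transpose * (A * A.transpose) * U = Matrix.diagonal lam := by
    have := hX.conjStarAlgAut_star_eigenvectorUnitary
    rw [Unitary.conjStarAlgAut_star_apply] at this
    rw [hstarU] at this
    rw [this, RCLike.ofReal_real_eq_id, Function.id_comp]
  have hYdiag : V.transpose * (B * B.transpose) * V = Matrix.diagonal mu := by
    have := hY.conjStarAlgAut_star_eigenvectorUnitary
    rw [Unitary.conjStarAlgAut_star_apply] at this
    rw [hstarV] at this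
    rw [this, RCLike.ofReal_real_eq_id, Function.id_comp]
  set A1 : Matrix (Fin pp) (Fin nn) ℝ := U.transpose * A with hA1
  set B1 : Matrix (Fin pp) (Fin nn) ℝ := V.transpose * B with hB1
  have hA1d : A1 * A1.transpose = Matrix.diagonal lam := by
    rw [hA1, Matrix.transpose_mul, Matrix.transpose_transpose, ← hXdiag]
    simp only [Matrix.mul_assoc]
  have hB1d : B1 * B1.transpose = Matrix.diagonal mu := by
    rw [hB1, Matrix.transpose_mul, Matrix.transpose_transpose, ← hYdiag]
    simp only [Matrix.mul_assoc]
  have hA1row := aux_diag_rows hA1d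
  have hB1row := aux_diag_rows hB1d
  have hlam0 : ∀ i, 0 ≤ lam i := by
    intro i
    have := hA1row i i
    simp at this
    rw [← this]
    exact Finset.sum_nonneg fun k _ => mul_self_nonneg _
  have hmu0 : ∀ i, 0 ≤ mu i := by
    intro i
    have := hB1row i i
    simp at this
    rw [← this]
    exact Finset.sum_nonneg fun k _ => mul_self_nonneg _
  set a : Fin pp → ℝ := fun i => Real.sqrt (lam i) with ha
  set b : Fin pp → ℝ := fun i => Real.sqrt (mu i) with hb
  have ha2 : ∀ i, a i * a i = lam i := fun i => Real.mul_self_sqrt (hlam0 i)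
  have hb2 : ∀ i, b i * b i = mu i := fun i => Real.mul_self_sqrt (hmu0 i)
  have ha0 : ∀ i, 0 ≤ a i := fun i => Real.sqrt_nonneg _
  have hb0 : ∀ i, 0 ≤ b i := fun i => Real.sqrt_nonneg _
  have hA1zero : ∀ i, a i = 0 → ∀ k, A1 i k = 0 := by
    intro i hai k
    have hl : lam i = 0 := by rw [← ha2 i, hai, mul_zero]
    have hsum : (∑ k, A1 i k * A1 i k) = 0 := by
      have := hA1row i i; simp at this; rw [this, hl]
    have := (Finset.sum_eq_zero_iff_of_nonneg
      (fun k _ => mul_self_nonneg (A1 i k))).1 hsum k (Finset.mem_univ k)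
    exact mul_self_eq_zero.1 this
  have hB1zero : ∀ j, b j = 0 → ∀ k, B1 j k = 0 := by
    intro j hbj k
    have hl : mu j = 0 := by rw [← hb2 j, hbj, mul_zero]
    have hsum : (∑ k, B1 j k * B1 j k) = 0 := by
      have := hB1row j j; simp at this; rw [this, hl]
    have := (Finset.sum_eq_zero_iff_of_nonneg
      (fun k _ => mul_self_nonneg (B1 j k))).1 hsum k (Finset.mem_univ k)
    exact mul_self_eq_zero.1 this
  set c : Fin pp → Fin pp → ℝ := fun i j => ∑ k, A1 i k * B1 j k with hcdef
  set Q : Matrix (Fin pp) (Fin pp) ℝ := V.transpose * U with hQ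
  have hQtQ : Q.transpose * Q = 1 := by
    rw [hQ, Matrix.transpose_mul, Matrix.transpose_transpose]
    calc U.transpose * V * (V.transpose * U)
        = U.transpose * (V * V.transpose) * U := by noncomm_ring
      _ = 1 := by rw [hVVt, Matrix.mul_one, hUtU]
  have hQQt : Q * Q.transpose = 1 := by
    rw [hQ, Matrix.transpose_mul, Matrix.transpose_transpose]
    calc V.transpose * U * (U.transpose * V)
        = V.transpose * (U * U.transpose) * V := by noncomm_ring
      _ = 1 := by rw [hUUt, Matrix.mul_one, hVtV]
  have hQrow : ∀ i, (∑ j, Q i j * Q i j) = 1 := by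
    intro i
    have := congrFun (congrFun hQQt i) i
    rw [Matrix.mul_apply] at this
    simp only [Matrix.transpose_apply] at this
    rw [Matrix.one_apply_eq] at this
    exact this
  have hQcol : ∀ j, (∑ i, Q i j * Q i j) = 1 := by
    intro j
    have := congrFun (congrFun hQtQ j) j
    rw [Matrix.mul_apply] at this
    simp only [Matrix.transpose_apply] at this
    rw [Matrix.one_apply_eq] at this
    exact this
    -- normalized inner products
  set chat : Fin pp → Fin pp → ℝ :=
    fun i j => if a i * b j = 0 then 0 else c i j / (a i * b j) with hchat
  have hczero : ∀ i j, a i * b j = 0 → c i j = 0 := by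
    intro i j hij
    rcases mul_eq_zero.1 hij with hai | hbj
    · rw [hcdef]
      exact Finset.sum_eq_zero fun k _ => by rw [hA1zero i hai k, zero_mul]
    · rw [hcdef]
      exact Finset.sum_eq_zero fun k _ => by rw [hB1zero j hbj k, mul_zero]
  have hc_eq : ∀ i j, c i j = a i * b j * chat i j := by
    intro i j
    by_cases hij : a i * b j = 0
    · rw [hchat]; simp only [if_pos hij]
      rw [hczero i j hij, mul_zero]
    · rw [hchat]; simp only [if_neg hij]
      exact (mul_div_cancel₀ (c i j) hij).symm
  -- Bessel: row sums of chat² are ≤ 1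
  have hchatrow : ∀ i, (∑ j, chat i j ^ 2) ≤ 1 := by
    intro i
    by_cases hai : a i = 0
    · have : ∀ j, chat i j = 0 := by
        intro j
        rw [hchat]
        simp [hai]
      simp [this]
    · set s : Finset (Fin pp) := Finset.univ.filter (fun j => b j ≠ 0) with hs
      have hrestrict : (∑ j, chat i j ^ 2) = ∑ j ∈ s, chat i j ^ 2 := by
        symm
        apply Finset.sum_subset (Finset.subset_univ s)
        intro j _ hj
        rw [hs] at hj
        simp only [Finset.mem_filter, Finset.mem_univ, true_and, not_not] at hj
        rw [hchat]
        simp [hj]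
      rw [hrestrict]
      have hbess := aux_bessel s (fun j k => B1 j k / b j) (fun k => A1 i k / a i) ?_ ?_
      · refine le_trans (le_of_eq ?_) hbess
        apply Finset.sum_congr rfl
        intro j hj
        rw [hs] at hj
        simp only [Finset.mem_filter, Finset.mem_univ, true_and] at hj
        congr 1
        rw [hchat]
        have hne : a i * b j ≠ 0 := mul_ne_zero hai hj
        simp only [if_neg hne]
        rw [hcdef]
        simp only []
        rw [Finset.sum_div]
        apply Finset.sum_congr rfl
        intro k _
        field_simp
      · intro j hj l hl
        rw [hs] at hj hl
        simp only [Finset.mem_filter, Finset.mem_univ, true_and] at hj hl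
        have : (∑ k, B1 j k / b j * (B1 l k / b l)) = (∑ k, B1 j k * B1 l k) / (b j * b l) := by
          rw [Finset.sum_div]
          apply Finset.sum_congr rfl
          intro k _
          field_simp
        rw [this, hB1row j l]
        by_cases hjl : j = l
        · subst hjl
          simp only [if_pos rfl]
          rw [← hb2 j]
          field_simp
          simp
        · simp [hjl]
      · have : (∑ k, A1 i k / a i * (A1 i k / a i)) = (∑ k, A1 i k * A1 i k) / (a i * a i) := by
          rw [Finset.sum_div]
          apply Finset.sum_congr rfl
          intro k _
          field_simp
        rw [this]
        have h1 := hA1row i i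
        simp at h1
        rw [h1, ← ha2 i]
        field_simp
  -- Bessel: column sums of chat² are ≤ 1
  have hchatcol : ∀ j, (∑ i, chat i j ^ 2) ≤ 1 := by
    intro j
    by_cases hbj : b j = 0
    · have : ∀ i, chat i j = 0 := by
        intro i
        rw [hchat]
        simp [hbj]
      simp [this]
    · set s : Finset (Fin pp) := Finset.univ.filter (fun i => a i ≠ 0) with hs
      have hrestrict : (∑ i, chat i j ^ 2) = ∑ i ∈ s, chat i j ^ 2 := by
        symm
        apply Finset.sum_subset (Finset.subset_univ s)
        intro i _ hi
        rw [hs] at hi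
        simp only [Finset.mem_filter, Finset.mem_univ, true_and, not_not] at hi
        rw [hchat]
        simp [hi]
      rw [hrestrict]
      have hbess := aux_bessel s (fun i k => A1 i k / a i) (fun k => B1 j k / b j) ?_ ?_
      · refine le_trans (le_of_eq ?_) hbess
        apply Finset.sum_congr rfl
        intro i hi
        rw [hs] at hi
        simp only [Finset.mem_filter, Finset.mem_univ, true_and] at hi
        congr 1
        rw [hchat]
        have hne : a i * b j ≠ 0 := mul_ne_zero hi hbj
        simp only [if_neg hne]
        rw [hcdef]
        simp only []
        rw [Finset.sum_div]
        apply Finset.sum_congr rfl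
        intro k _
        field_simp
      · intro i hi l hl
        rw [hs] at hi hl
        simp only [Finset.mem_filter, Finset.mem_univ, true_and] at hi hl
        have : (∑ k, A1 i k / a i * (A1 l k / a l)) = (∑ k, A1 i k * A1 l k) / (a i * a l) := by
          rw [Finset.sum_div]
          apply Finset.sum_congr rfl
          intro k _
          field_simp
        rw [this, hA1row i l]
        by_cases hil : i = l
        · subst hil
          simp only [if_pos rfl]
          rw [← ha2 i]
          field_simp
          simp
        · simp [hil]
      · have : (∑ k, B1 j k / b j * (B1 j k / b j)) = (∑ k, B1 j k * B1 j k) / (b j * b j) := by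
          rw [Finset.sum_div]
          apply Finset.sum_congr rfl
          intro k _
          field_simp
        rw [this]
        have h1 := hB1row j j
        simp at h1
        rw [h1, ← hb2 j]
        field_simp
  -- the trace identity
  have hAU : U * A1 = A := by
    rw [hA1, ← Matrix.mul_assoc, hUUt, Matrix.one_mul]
  have hBV : V * B1 = B := by
    rw [hB1, ← Matrix.mul_assoc, hVVt, Matrix.one_mul]
  have htr : (A * B.transpose).trace = ∑ i, ∑ j, Q j i * c i j := by
    have h1 : A * B.transpose = U * (A1 * B1.transpose) * V.transpose := by
      rw [← hAU, ← hBV, Matrix.transpose_mul]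
      simp only [Matrix.mul_assoc]
    rw [h1, Matrix.trace_mul_cycle, ← hQ]
    have h2 : ∀ j : Fin pp, (Q * (A1 * B1.transpose)) j j = ∑ i, Q j i * c i j := by
      intro j
      rw [Matrix.mul_apply]
      refine Finset.sum_congr rfl fun i _ => ?_
      congr 1
    calc (Q * (A1 * B1.transpose)).trace
        = ∑ j, (Q * (A1 * B1.transpose)) j j := by
          simp [Matrix.trace, Matrix.diag]
      _ = ∑ j, ∑ i, Q j i * c i j := Finset.sum_congr rfl fun j _ => h2 j
      _ = ∑ i, ∑ j, Q j i * c i j := Finset.sum_comm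
  -- the substochastic matrix e
  set e : Matrix (Fin pp) (Fin pp) ℝ :=
    Matrix.of fun i j => (chat i j ^ 2 + Q j i ^ 2) / 2 with he
  have he0 : ∀ i j, 0 ≤ e i j := by
    intro i j
    rw [he]
    simp only [Matrix.of_apply]
    positivity
  have herow : ∀ i, (∑ j, e i j) ≤ 1 := by
    intro i
    rw [he]
    simp only [Matrix.of_apply]
    rw [← Finset.sum_div, Finset.sum_add_distrib]
    have hq : (∑ j, Q j i ^ 2) = 1 := by
      simpa [sq] using hQcol i
    have := hchatrow i
    rw [hq]
    linarith
  have hecol : ∀ j, (∑ i, e i j) ≤ 1 := by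
    intro j
    rw [he]
    simp only [Matrix.of_apply]
    rw [← Finset.sum_div, Finset.sum_add_distrib]
    have hq : (∑ i, Q j i ^ 2) = 1 := by
      simpa [sq] using hQrow j
    have := hchatcol j
    rw [hq]
    linarith
  -- assemble
  obtain ⟨D, hD, hDe⟩ := aux_complete e he0 herow hecol
  obtain ⟨σ, hσ⟩ := aux_perm_bound a b hD
  refine ⟨σ, ?_⟩
  have step1 : (A * B.transpose).trace ≤ ∑ i, ∑ j, a i * b j * e i j := by
    rw [htr]
    refine Finset.sum_le_sum fun i _ => Finset.sum_le_sum fun j _ => ?_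
    rw [hc_eq i j, he]
    simp only [Matrix.of_apply]
    have h1 : chat i j * Q j i ≤ (chat i j ^ 2 + Q j i ^ 2) / 2 := by nlinarith [sq_nonneg (chat i j - Q j i)]
    calc Q j i * (a i * b j * chat i j) = (a i * b j) * (chat i j * Q j i) := by ring
      _ ≤ (a i * b j) * ((chat i j ^ 2 + Q j i ^ 2) / 2) :=
          mul_le_mul_of_nonneg_left h1 (mul_nonneg (ha0 i) (hb0 j))
      _ = a i * b j * ((chat i j ^ 2 + Q j i ^ 2) / 2) := by ring
  have step2 : (∑ i, ∑ j, a i * b j * e i j) ≤ ∑ i, ∑ j, a i * b j * D i j := by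
    refine Finset.sum_le_sum fun i _ => Finset.sum_le_sum fun j _ => ?_
    exact mul_le_mul_of_nonneg_left (hDe i j) (mul_nonneg (ha0 i) (hb0 j))
  exact le_trans (le_trans step1 step2) hσ

lemma aux_isHermitian {pp nn : ℕ} (A : Matrix (Fin pp) (Fin nn) ℝ) :
    (A * A.transpose).IsHermitian := by
  have := Matrix.isHermitian_mul_conjTranspose_self A
  rwa [Matrix.conjTranspose_eq_transpose_of_trivial] at this

lemma aux_trace_eq_sum_eig {pp : ℕ} (M : Matrix (Fin pp) (Fin pp) ℝ) (hM : M.IsHermitian) :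
    M.trace = ∑ i, hM.eigenvalues i := by
  set U : Matrix (Fin pp) (Fin pp) ℝ := (hM.eigenvectorUnitary : Matrix (Fin pp) (Fin pp) ℝ)
  have h1 : M = U * Matrix.diagonal hM.eigenvalues * star U := by
    have := hM.spectral_theorem
    rwa [RCLike.ofReal_real_eq_id, Function.id_comp] at this
  have h2 : star U * U = 1 := Matrix.mem_unitaryGroup_iff'.mp hM.eigenvectorUnitary.2
  calc M.trace = (U * Matrix.diagonal hM.eigenvalues * star U).trace := by rw [← h1]
    _ = (star U * U * Matrix.diagonal hM.eigenvalues).trace := by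
        rw [Matrix.trace_mul_cycle]
    _ = (Matrix.diagonal hM.eigenvalues).trace := by rw [h2, Matrix.one_mul]
    _ = ∑ i, hM.eigenvalues i := Matrix.trace_diagonal _

lemma aux_integrable_dirac {f : ℝ → ℝ} (hf : Continuous f) (x : ℝ) :
    Integrable f (Measure.dirac x) := by
  refine ⟨hf.aestronglyMeasurable, ?_⟩
  rw [HasFiniteIntegral]
  rw [lintegral_dirac]
  exact ENNReal.coe_lt_top

lemma aux_integral_esd {pp : ℕ} (M : Matrix (Fin pp) (Fin pp) ℝ) (hM : M.IsHermitian)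
    {f : ℝ → ℝ} (hf : Continuous f) :
    (∫ x, f x ∂(ESD M)) = (pp : ℝ)⁻¹ * ∑ i, f (hM.eigenvalues i) := by
  rw [ESD, dif_pos hM, integral_smul_measure]
  rw [MeasureTheory.integral_finset_sum_measure
    (fun i _ => aux_integrable_dirac hf (hM.eigenvalues i))]
  have h1 : ∀ i : Fin pp, (∫ x, f x ∂(Measure.dirac (hM.eigenvalues i)))
      = f (hM.eigenvalues i) := fun i => integral_dirac f _
  rw [Finset.sum_congr rfl fun i _ => h1 i]
  rw [smul_eq_mul, ENNReal.toReal_inv, ENNReal.toReal_natCast]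

-- eigenvalue nonnegativity, from trace lemma? need per-eigenvalue. Use PosSemidef:
lemma aux_eig_nonneg {pp nn : ℕ} (A : Matrix (Fin pp) (Fin nn) ℝ) (i : Fin pp) :
    0 ≤ (aux_isHermitian A).eigenvalues i := by
  have h := Matrix.posSemidef_self_mul_conjTranspose A
  rw [Matrix.conjTranspose_eq_transpose_of_trivial] at h
  exact h.eigenvalues_nonneg i

/-- Lemma 1(b): for `p × n` real matrices `A`, `B` with `X = AAᵀ`, `Y = BBᵀ`,
`d_BL²(F^X, F^Y) ≤ (2/p²) Tr(X + Y) Tr((A - B)(A - B)ᵀ)`. -/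
theorem dBL_sq_le_trace_prod (p n : ℕ) (A B : Matrix (Fin p) (Fin n) ℝ) :
    dBL (ESD (A * A.transpose)) (ESD (B * B.transpose)) ^ 2 ≤
      (2 / (p : ℝ) ^ 2) *
        (Matrix.trace (A * A.transpose + B * B.transpose) *
          Matrix.trace ((A - B) * (A - B).transpose)) := by
  classical
  have hX := aux_isHermitian A
  have hY := aux_isHermitian B
  set lam := hX.eigenvalues with hlam
  set mu := hY.eigenvalues with hmu
  set a : Fin p → ℝ := fun i => Real.sqrt (lam i) with ha
  set b : Fin p → ℝ := fun i => Real.sqrt (mu i) with hb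
  have hlam0 : ∀ i, 0 ≤ lam i := fun i => aux_eig_nonneg A i
  have hmu0 : ∀ i, 0 ≤ mu i := fun i => aux_eig_nonneg B i
  have ha2 : ∀ i, a i ^ 2 = lam i := fun i => Real.sq_sqrt (hlam0 i)
  have hb2 : ∀ i, b i ^ 2 = mu i := fun i => Real.sq_sqrt (hmu0 i)
  have ha0 : ∀ i, 0 ≤ a i := fun i => Real.sqrt_nonneg _
  have hb0 : ∀ i, 0 ≤ b i := fun i => Real.sqrt_nonneg _
  -- traces
  have htrX : (A * A.transpose).trace = ∑ i, lam i := aux_trace_eq_sum_eig _ hX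
  have htrY : (B * B.transpose).trace = ∑ i, mu i := aux_trace_eq_sum_eig _ hY
  have htrX0 : 0 ≤ (A * A.transpose).trace := aux_trace_mmT_nonneg _ _ A
  have htrY0 : 0 ≤ (B * B.transpose).trace := aux_trace_mmT_nonneg _ _ B
  have htrD0 : 0 ≤ ((A - B) * (A - B).transpose).trace := aux_trace_mmT_nonneg _ _ (A - B)
  have htrXY : (A * A.transpose + B * B.transpose).trace
      = (A * A.transpose).trace + (B * B.transpose).trace := Matrix.trace_add _ _
  have hRHS0 : 0 ≤ (2 / (p : ℝ) ^ 2) *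
      (Matrix.trace (A * A.transpose + B * B.transpose) *
        Matrix.trace ((A - B) * (A - B).transpose)) := by
    apply mul_nonneg
    · positivity
    · apply mul_nonneg
      · rw [htrXY]; linarith
      · exact htrD0
  set RHS := (2 / (p : ℝ) ^ 2) *
      (Matrix.trace (A * A.transpose + B * B.transpose) *
        Matrix.trace ((A - B) * (A - B).transpose)) with hRHS
  -- the set S
  set S := { r : ℝ | ∃ f : ℝ → ℝ, (∀ x, |f x| ≤ 1) ∧ LipschitzWith 1 f ∧
    r = |(∫ x, f x ∂(ESD (A * A.transpose))) - (∫ x, f x ∂(ESD (B * B.transpose)))| } with hS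
  have hzero_mem : (0 : ℝ) ∈ S := by
    refine ⟨fun _ => 0, fun x => by simp, ?_, by simp⟩
    exact (LipschitzWith.const 0).weaken (zero_le_one)
  -- trace of (A-B)(A-B)ᵀ expansion
  have htrD : ((A - B) * (A - B).transpose).trace
      = (A * A.transpose).trace + (B * B.transpose).trace - 2 * (A * B.transpose).trace := by
    have hBA : (B * A.transpose).trace = (A * B.transpose).trace := by
      have : (B * A.transpose).transpose = A * B.transpose := by
        rw [Matrix.transpose_mul, Matrix.transpose_transpose]
      rw [← this, Matrix.trace_transpose]
    rw [Matrix.transpose_sub, Matrix.sub_mul, Matrix.mul_sub, Matrix.mul_sub,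
      Matrix.trace_sub, Matrix.trace_sub, Matrix.trace_sub, hBA]
    ring
  -- von Neumann
  obtain ⟨σ, hσ⟩ := aux_vonNeumann A B hX hY
  -- key quadratic bound
  have key : (∑ i, (a i - b (σ i)) ^ 2) ≤ ((A - B) * (A - B).transpose).trace := by
    have hexp : ∀ i : Fin p, (a i - b (σ i)) ^ 2
        = lam i + mu (σ i) - 2 * (a i * b (σ i)) := by
      intro i
      have := ha2 i; have := hb2 (σ i)
      nlinarith [ha2 i, hb2 (σ i)]
    rw [Finset.sum_congr rfl fun i _ => hexp i]
    rw [Finset.sum_sub_distrib, Finset.sum_add_distrib]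
    have hmusum : (∑ i, mu (σ i)) = ∑ i, mu i := Equiv.sum_comp σ mu
    have h2 : (∑ i, 2 * (a i * b (σ i))) = 2 * ∑ i, a i * b (σ i) := by
      rw [Finset.mul_sum]
    rw [hmusum, h2, htrD, htrX, htrY]
    linarith
  have sumplus : (∑ i, (a i + b (σ i)) ^ 2)
      ≤ 2 * ((A * A.transpose).trace + (B * B.transpose).trace) := by
    have hexp : ∀ i : Fin p, (a i + b (σ i)) ^ 2 ≤ 2 * lam i + 2 * mu (σ i) := by
      intro i
      nlinarith [ha2 i, hb2 (σ i), sq_nonneg (a i - b (σ i))]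
    calc (∑ i, (a i + b (σ i)) ^ 2) ≤ ∑ i, (2 * lam i + 2 * mu (σ i)) :=
          Finset.sum_le_sum fun i _ => hexp i
      _ = 2 * (∑ i, lam i) + 2 * (∑ i, mu (σ i)) := by
          rw [Finset.sum_add_distrib, Finset.mul_sum, Finset.mul_sum]
      _ = 2 * ((A * A.transpose).trace + (B * B.transpose).trace) := by
          rw [Equiv.sum_comp σ mu, htrX, htrY]; ring
  -- L1 eigenvalue bound squared
  have key2 : (∑ i, |lam i - mu (σ i)|) ^ 2
      ≤ 2 * ((A * A.transpose).trace + (B * B.transpose).trace)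
        * ((A - B) * (A - B).transpose).trace := by
    have habs : ∀ i : Fin p, |lam i - mu (σ i)| = (a i + b (σ i)) * |a i - b (σ i)| := by
      intro i
      rw [← ha2 i, ← hb2 (σ i)]
      have : a i ^ 2 - b (σ i) ^ 2 = (a i + b (σ i)) * (a i - b (σ i)) := by ring
      rw [this, abs_mul, abs_of_nonneg (by positivity : (0:ℝ) ≤ a i + b (σ i))]
    rw [Finset.sum_congr rfl fun i _ => habs i]
    calc (∑ i, (a i + b (σ i)) * |a i - b (σ i)|) ^ 2
        ≤ (∑ i, (a i + b (σ i)) ^ 2) * (∑ i, |a i - b (σ i)| ^ 2) :=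
          Finset.sum_mul_sq_le_sq_mul_sq _ _ _
      _ = (∑ i, (a i + b (σ i)) ^ 2) * (∑ i, (a i - b (σ i)) ^ 2) := by
          congr 1
          exact Finset.sum_congr rfl fun i _ => sq_abs _
      _ ≤ (2 * ((A * A.transpose).trace + (B * B.transpose).trace))
          * ((A - B) * (A - B).transpose).trace := by
          apply mul_le_mul sumplus key
            (Finset.sum_nonneg fun i _ => sq_nonneg _)
            (by linarith)
  -- bound each element of S
  have hbound : ∀ r ∈ S, r ≤ Real.sqrt RHS := by
    rintro r ⟨f, hf1, hfL, rfl⟩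
    have hfc : Continuous f := hfL.continuous
    rw [aux_integral_esd _ hX hfc, aux_integral_esd _ hY hfc]
    rcases Nat.eq_zero_or_pos p with hp | hp
    · subst hp
      simp
    have hpinv : (0:ℝ) ≤ (p : ℝ)⁻¹ := by positivity
    have h1 : (p : ℝ)⁻¹ * (∑ i, f (lam i)) - (p : ℝ)⁻¹ * (∑ i, f (mu i))
        = (p : ℝ)⁻¹ * ((∑ i, f (lam i)) - ∑ i, f (mu i)) := by ring
    rw [h1, abs_mul, abs_of_nonneg hpinv]
    have h2 : |(∑ i, f (lam i)) - ∑ i, f (mu i)| ≤ ∑ i, |lam i - mu (σ i)| := by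
      have hmusum : (∑ i, f (mu i)) = ∑ i, f (mu (σ i)) := (Equiv.sum_comp σ (f ∘ mu)).symm
      rw [hmusum, ← Finset.sum_sub_distrib]
      refine le_trans (Finset.abs_sum_le_sum_abs _ _) (Finset.sum_le_sum fun i _ => ?_)
      have := hfL.dist_le_mul (lam i) (mu (σ i))
      rwa [Real.dist_eq, Real.dist_eq, NNReal.coe_one, one_mul] at this
    have h3 : (p : ℝ)⁻¹ * |(∑ i, f (lam i)) - ∑ i, f (mu i)|
        ≤ (p : ℝ)⁻¹ * ∑ i, |lam i - mu (σ i)| := mul_le_mul_of_nonneg_left h2 hpinv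
    refine le_trans h3 ?_
    have h4 : ((p : ℝ)⁻¹ * ∑ i, |lam i - mu (σ i)|) ^ 2 ≤ RHS := by
      rw [mul_pow]
      calc ((p : ℝ)⁻¹) ^ 2 * (∑ i, |lam i - mu (σ i)|) ^ 2
          ≤ ((p : ℝ)⁻¹) ^ 2 * (2 * ((A * A.transpose).trace + (B * B.transpose).trace)
            * ((A - B) * (A - B).transpose).trace) :=
            mul_le_mul_of_nonneg_left key2 (by positivity)
        _ = RHS := by
            rw [hRHS, htrXY]
            field_simp
    have h5 : (0:ℝ) ≤ (p : ℝ)⁻¹ * ∑ i, |lam i - mu (σ i)| :=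
      mul_nonneg hpinv (Finset.sum_nonneg fun i _ => abs_nonneg _)
    calc (p : ℝ)⁻¹ * ∑ i, |lam i - mu (σ i)|
        = Real.sqrt (((p : ℝ)⁻¹ * ∑ i, |lam i - mu (σ i)|) ^ 2) := (Real.sqrt_sq h5).symm
      _ ≤ Real.sqrt RHS := Real.sqrt_le_sqrt h4
  -- conclude
  have hbdd : BddAbove S := ⟨Real.sqrt RHS, fun r hr => hbound r hr⟩
  have hsup_le : sSup S ≤ Real.sqrt RHS := Real.sSup_le hbound (Real.sqrt_nonneg _)
  have hsup0 : 0 ≤ sSup S := le_csSup hbdd hzero_mem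
  have : dBL (ESD (A * A.transpose)) (ESD (B * B.transpose)) = sSup S := rfl
  rw [this]
  calc (sSup S) ^ 2 ≤ (Real.sqrt RHS) ^ 2 := by
        apply pow_le_pow_left₀ hsup0 hsup_le
    _ = RHS := Real.sq_sqrt hRHS0

end AuxDBLProofs
end
end

section
/- Fix positive integers h and d. The number of vectors a = (a_1,…,a_{2h}) ∈ {1,…,2n}^{2h} that are d-matched but not minimal d-matched is O(n^{h−1}) as n → ∞; that is, there is a constant C (depending only on h and d) such that this number is at most C·n^{h−1} for all n. -/
open MeasureTheory Filter Finset ProbabilityTheory Topology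
open scoped Classical ENNReal NNReal

noncomputable section

namespace MatchAux

variable {h : ℕ}

/-- closeness relation in ℕ form -/
def Rel (d : ℕ) (a : Fin (2*h) → ℕ) (i j : Fin (2*h)) : Prop :=
  a j ≤ a i + d ∧ a i ≤ a j + d

lemma Rel.symm' {d : ℕ} {a : Fin (2*h) → ℕ} {i j : Fin (2*h)} (hr : Rel d a i j) :
    Rel d a j i := ⟨hr.2, hr.1⟩

def key (a : Fin (2*h) → ℕ) (i : Fin (2*h)) : ℕ := (2*h+1) * a i + (i : ℕ)

lemma key_lt_of_val_lt {a : Fin (2*h) → ℕ} {i j : Fin (2*h)} (hv : a j < a i) :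
    key a j < key a i := by
  have hj : (j : ℕ) < 2*h := j.isLt
  calc (2*h+1) * a j + (j:ℕ) < (2*h+1) * a j + (2*h+1) := by omega
    _ = (2*h+1) * (a j + 1) := by ring
    _ ≤ (2*h+1) * a i := Nat.mul_le_mul_left _ (by omega)
    _ ≤ (2*h+1) * a i + (i:ℕ) := Nat.le_add_right _ _

lemma val_le_of_key_lt {a : Fin (2*h) → ℕ} {i j : Fin (2*h)} (hk : key a j < key a i) :
    a j ≤ a i := by
  by_contra hlt
  push_neg at hlt
  have := key_lt_of_val_lt (a := a) (i := j) (j := i) hlt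
  omega

lemma key_injective (a : Fin (2*h) → ℕ) : Function.Injective (key a) := by
  intro i j hij
  rcases Nat.lt_trichotomy (a i) (a j) with hv | hv | hv
  · exact absurd (key_lt_of_val_lt hv) (by omega)
  · unfold key at hij
    rw [hv] at hij
    exact Fin.ext (by omega)
  · exact absurd (key_lt_of_val_lt hv) (by omega)

/-- `i` is free: no lex-smaller index is `d`-close to it. -/
def Freeidx (d : ℕ) (a : Fin (2*h) → ℕ) (i : Fin (2*h)) : Prop :=
  ¬ ∃ j, key a j < key a i ∧ a j ≤ a i + d ∧ a i ≤ a j + d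

/-- A free index has minimal value in its component. -/
lemma free_min {d : ℕ} {a : Fin (2*h) → ℕ} {i j : Fin (2*h)}
    (hf : Freeidx d a i) (hE : Relation.EqvGen (Rel d a) i j) : a i ≤ a j := by
  have step : ∀ u v, Rel d a u v → (a i ≤ a u → a i ≤ a v) := by
    intro u v huv hu
    by_contra hv
    push_neg at hv
    have hk : key a v < key a i := key_lt_of_val_lt hv
    have : ¬ (a v ≤ a i + d ∧ a i ≤ a v + d) := fun hc => hf ⟨v, hk, hc⟩
    rcases huv with ⟨h1, h2⟩
    omega
  have main : ∀ u v, Relation.EqvGen (Rel d a) u v → (a i ≤ a u ↔ a i ≤ a v) := by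
    intro u v hE'
    induction hE' with
    | rel x y hxy => exact ⟨step x y hxy, step y x hxy.symm'⟩
    | refl x => exact Iff.rfl
    | symm x y _ ih => exact ih.symm
    | trans x y z _ _ ih1 ih2 => exact ih1.trans ih2
  exact (main i j hE).mp le_rfl

lemma free_unique {d : ℕ} {a : Fin (2*h) → ℕ} {i j : Fin (2*h)}
    (hfi : Freeidx d a i) (hfj : Freeidx d a j)
    (hE : Relation.EqvGen (Rel d a) i j) : i = j := by
  have h1 : a i ≤ a j := free_min hfi hE
  have h2 : a j ≤ a i := free_min hfj (hE.symm _ _)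
  by_contra hne
  have hk : key a i ≠ key a j := fun hc => hne (key_injective a hc)
  rcases Nat.lt_or_ge (key a i) (key a j) with hlt | hge
  · exact hfj ⟨i, hlt, by omega, by omega⟩
  · exact hfi ⟨j, by omega, by omega, by omega⟩

lemma eqvGen_cases {α : Type*} {R : α → α → Prop} (hsym : ∀ x y, R x y → R y x)
    {u v : α} (hE : Relation.EqvGen R u v) :
    u = v ∨ R u v ∨ ∃ w, w ≠ u ∧ w ≠ v ∧ Relation.EqvGen R u w := by
  induction hE with
  | rel x y hxy => exact Or.inr (Or.inl hxy)
  | refl x => exact Or.inl rfl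
  | symm x y hxy ih =>
    rcases ih with heq | hr | ⟨w, hwx, hwy, hEw⟩
    · exact Or.inl heq.symm
    · exact Or.inr (Or.inl (hsym _ _ hr))
    · exact Or.inr (Or.inr ⟨w, hwy, hwx, (hxy.symm _ _).trans _ _ _ hEw⟩)
  | trans x y z h1 h2 ih1 ih2 =>
    by_cases hxz : x = z
    · exact Or.inl hxz
    by_cases hyx : y = x
    · subst hyx; exact ih2
    by_cases hyz : y = z
    · subst hyz; exact ih1
    · exact Or.inr (Or.inr ⟨y, hyx, hyz, h1⟩)

noncomputable def Sfree (d : ℕ) (a : Fin (2*h) → ℕ) : Finset (Fin (2*h)) :=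
  Finset.univ.filter (fun i => Freeidx d a i)

lemma mem_Sfree {d : ℕ} {a : Fin (2*h) → ℕ} {i : Fin (2*h)} :
    i ∈ Sfree d a ↔ Freeidx d a i := by simp [Sfree]

end MatchAux
namespace MatchAux

variable {h : ℕ}

lemma dMatched_rel {d : ℕ} {a : Fin (2*h) → ℕ} (hm : dMatched d a) (i : Fin (2*h)) :
    ∃ j, j ≠ i ∧ Rel d a i j := by
  obtain ⟨j, hji, habs⟩ := hm i
  rw [abs_le] at habs
  exact ⟨j, hji, by omega, by omega⟩

lemma sfree_card_le (d : ℕ) (hh : 0 < h) {a : Fin (2*h) → ℕ}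
    (hm : dMatched d a) (hnm : ¬ minimalMatched d a) :
    (Sfree d a).card ≤ h - 1 := by
  set s : Setoid (Fin (2*h)) := Relation.EqvGen.setoid (Rel d a) with hs
  have hsr : ∀ i j : Fin (2*h), (Quotient.mk s i = Quotient.mk s j) ↔
      Relation.EqvGen (Rel d a) i j := by
    intro i j
    constructor
    · exact Quotient.exact
    · exact fun hE => Quotient.sound hE
  letI : DecidableEq (Quotient s) := Classical.decEq _
  letI : Fintype (Quotient s) := Fintype.ofSurjective (Quotient.mk s) Quotient.mk_surjective
  set p := Fintype.card (Quotient s) with hp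
  -- card Sfree ≤ p
  have hcard1 : (Sfree d a).card ≤ p := by
    rw [hp, ← Finset.card_univ]
    apply Finset.card_le_card_of_injOn (fun i => Quotient.mk s i)
    · intro i _; exact Finset.mem_univ _
    · intro i hi j hj hij
      exact free_unique (mem_Sfree.mp hi) (mem_Sfree.mp hj) ((hsr i j).mp hij)
  -- fibers
  set fib : Quotient s → Finset (Fin (2*h)) :=
    fun q => Finset.univ.filter (fun i => Quotient.mk s i = q) with hfib
  have hsum : ∑ q : Quotient s, (fib q).card = 2 * h := by
    rw [← Finset.card_eq_sum_card_fiberwise (fun x _ => Finset.mem_univ (Quotient.mk s x))]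
    simp
  have hfib2 : ∀ q, 2 ≤ (fib q).card := by
    intro q
    obtain ⟨i, rfl⟩ := Quotient.mk_surjective q
    obtain ⟨j, hji, hr⟩ := dMatched_rel hm i
    rw [hfib]
    apply Finset.one_lt_card.mpr
    refine ⟨i, Finset.mem_filter.mpr ⟨Finset.mem_univ _, rfl⟩,
      j, Finset.mem_filter.mpr ⟨Finset.mem_univ _, ?_⟩, hji.symm⟩
    exact (hsr j i).mpr (Relation.EqvGen.rel _ _ hr.symm')
  have hfib3 : ∃ q, 3 ≤ (fib q).card := by
    by_contra hc
    push_neg at hc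
    -- every class has exactly two elements; build the involution
    have huniq : ∀ i j k : Fin (2*h), j ≠ i → k ≠ i →
        Quotient.mk s j = Quotient.mk s i → Quotient.mk s k = Quotient.mk s i → j = k := by
      intro i j k hji hki hj hk
      by_contra hjk
      have : 2 < (fib (Quotient.mk s i)).card := by
        apply Finset.two_lt_card.mpr
        refine ⟨i, Finset.mem_filter.mpr ⟨Finset.mem_univ _, rfl⟩,
          j, Finset.mem_filter.mpr ⟨Finset.mem_univ _, hj⟩,
          k, Finset.mem_filter.mpr ⟨Finset.mem_univ _, hk⟩, ?_, ?_, hjk⟩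
        · exact fun hc' => hji hc'.symm
        · exact fun hc' => hki hc'.symm
      exact absurd this (by have := hc (Quotient.mk s i); omega)
    have hex : ∀ i : Fin (2*h), ∃ j, j ≠ i ∧ Quotient.mk s j = Quotient.mk s i := by
      intro i
      obtain ⟨j, hji, hr⟩ := dMatched_rel hm i
      exact ⟨j, hji, (hsr j i).mpr (Relation.EqvGen.rel _ _ hr.symm')⟩
    set σf : Fin (2*h) → Fin (2*h) := fun i => (hex i).choose with hσf
    have hσspec : ∀ i, σf i ≠ i ∧ Quotient.mk s (σf i) = Quotient.mk s i :=
      fun i => (hex i).choose_spec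
    have hinv : Function.Involutive σf := by
      intro i
      have h1 := hσspec i
      have h2 := hσspec (σf i)
      -- σf (σf i) and i are both ≠ σf i and in class of σf i
      exact huniq (σf i) (σf (σf i)) i h2.1 (fun hc' => h1.1 hc'.symm) h2.2 h1.2.symm
    apply hnm
    refine ⟨hinv.toPerm, ?_, ?_, ?_⟩
    · intro x; simpa using (hσspec x).1
    · intro x; simpa using hinv x
    · intro x y hxy
      simp only [Function.Involutive.coe_toPerm]
      constructor
      · intro habs
        rw [abs_le] at habs
        have hr : Rel d a y x := ⟨by omega, by omega⟩
        have : Quotient.mk s y = Quotient.mk s x := (hsr y x).mpr (Relation.EqvGen.rel _ _ hr)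
        exact huniq x (σf x) y (hσspec x).1 (Ne.symm hxy) (hσspec x).2 this
      · intro hσ
        have hcls : Quotient.mk s y = Quotient.mk s x := hσ ▸ (hσspec x).2
        have hE : Relation.EqvGen (Rel d a) x y := (hsr x y).mp hcls.symm
        rcases eqvGen_cases (fun _ _ hr => hr.symm') hE with heq | hr | ⟨w, hwx, hwy, hEw⟩
        · exact absurd heq hxy
        · rw [abs_le]; rcases hr with ⟨h1, h2⟩; constructor <;> [omega; omega]
        · exact absurd (huniq x w y hwx (Ne.symm hxy) ((hsr w x).mpr (hEw.symm _ _)) hcls) hwy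
  -- combine
  obtain ⟨q0, hq0⟩ := hfib3
  have hsplit : (fib q0).card + ∑ q ∈ Finset.univ.erase q0, (fib q).card = 2*h := by
    have h2 := Finset.add_sum_erase Finset.univ (fun q => (fib q).card) (Finset.mem_univ q0)
    omega
  have hrest : (Finset.univ.erase q0).card * 2 ≤ ∑ q ∈ Finset.univ.erase q0, (fib q).card := by
    have := Finset.card_nsmul_le_sum (Finset.univ.erase q0) (fun q => (fib q).card) 2
      (fun q _ => hfib2 q)
    simpa [smul_eq_mul] using this
  have hpcard : (Finset.univ.erase q0).card = p - 1 := by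
    rw [Finset.card_erase_of_mem (Finset.mem_univ q0), Finset.card_univ]
  have hp1 : 1 ≤ p := by
    rw [hp]
    exact Fintype.card_pos_iff.mpr ⟨q0⟩
  omega

end MatchAux
namespace MatchAux

variable {h : ℕ}

def rankIn (S : Finset (Fin (2*h))) (i : Fin (2*h)) : ℕ :=
  (S.filter (fun j => j < i)).card

lemma rankIn_lt {S : Finset (Fin (2*h))} {i : Fin (2*h)} (hi : i ∈ S) :
    rankIn S i < S.card := by
  have hsub : S.filter (fun j => j < i) ⊆ S.erase i := by
    intro j hj
    rcases Finset.mem_filter.mp hj with ⟨h1, h2⟩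
    exact Finset.mem_erase.mpr ⟨Fin.ne_of_lt h2, h1⟩
  calc rankIn S i ≤ (S.erase i).card := Finset.card_le_card hsub
    _ < S.card := Finset.card_erase_lt_of_mem hi

lemma rankIn_strictmono {S : Finset (Fin (2*h))} {i i' : Fin (2*h)}
    (hi : i ∈ S) (hlt : i < i') : rankIn S i < rankIn S i' := by
  apply Finset.card_lt_card
  rw [Finset.ssubset_iff_of_subset]
  · exact ⟨i, Finset.mem_filter.mpr ⟨hi, hlt⟩, fun hc =>
      absurd (Finset.mem_filter.mp hc).2 (lt_irrefl i)⟩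
  · intro j hj
    rcases Finset.mem_filter.mp hj with ⟨h1, h2⟩
    exact Finset.mem_filter.mpr ⟨h1, h2.trans hlt⟩

lemma rankIn_injOn {S : Finset (Fin (2*h))} {i i' : Fin (2*h)}
    (hi : i ∈ S) (hi' : i' ∈ S) (heq : rankIn S i = rankIn S i') : i = i' := by
  rcases lt_trichotomy i i' with hlt | heq' | hlt
  · exact absurd (rankIn_strictmono hi hlt) (by omega)
  · exact heq'
  · exact absurd (rankIn_strictmono hi' hlt) (by omega)

noncomputable def encG (d : ℕ) (a : Fin (2*h) → ℕ) (i : Fin (2*h)) :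
    Fin (2*h) × Fin (2*d+1) :=
  if hf : ∃ j, key a j < key a i ∧ a j ≤ a i + d ∧ a i ≤ a j + d then
    (hf.choose, ⟨a i + d - a hf.choose, by have := hf.choose_spec; omega⟩)
  else (i, ⟨0, by omega⟩)

noncomputable def encV (d n : ℕ) (hn : 0 < n) (a : Fin (2*h) → ℕ) (k : ℕ) : Fin (2*n) :=
  if hf : ∃ i, i ∈ Sfree d a ∧ rankIn (Sfree d a) i = k ∧ 1 ≤ a i ∧ a i ≤ 2*n then
    ⟨a hf.choose - 1, by have := hf.choose_spec; omega⟩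
  else ⟨0, by omega⟩

end MatchAux

open MatchAux

/-- Lemma 3: the number of vectors `a ∈ {1,…,2n}^{2h}` that are d-matched but not
minimal d-matched is `O(n^{h-1})`. -/
theorem card_matched_not_minimal_bigO (h d : ℕ) (hh : 0 < h) :
    ∃ C : ℝ, ∀ n : ℕ,
      (Nat.card {a : Fin (2 * h) → ℕ //
          (∀ i, 1 ≤ a i ∧ a i ≤ 2 * n) ∧ dMatched d a ∧ ¬ minimalMatched d a} : ℝ)
        ≤ C * (n : ℝ) ^ (h - 1) := by
  refine ⟨((2^(2*h) * (2*h*(2*d+1))^(2*h) * 2^(h-1) : ℕ) : ℝ), ?_⟩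
  intro n
  rcases Nat.eq_zero_or_pos n with rfl | hn
  · have : IsEmpty {a : Fin (2 * h) → ℕ //
        (∀ i, 1 ≤ a i ∧ a i ≤ 2 * 0) ∧ dMatched d a ∧ ¬ minimalMatched d a} := by
      refine ⟨fun x => ?_⟩
      obtain ⟨a, ha, -, -⟩ := x
      have := ha ⟨0, by omega⟩
      omega
    rw [Nat.card_of_isEmpty]
    simp only [Nat.cast_zero]
    positivity
  · have hineq : Nat.card {a : Fin (2 * h) → ℕ //
        (∀ i, 1 ≤ a i ∧ a i ≤ 2 * n) ∧ dMatched d a ∧ ¬ minimalMatched d a}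
        ≤ 2^(2*h) * (2*h*(2*d+1))^(2*h) * (2*n)^(h-1) := by
      set Bad := {a : Fin (2 * h) → ℕ //
        (∀ i, 1 ≤ a i ∧ a i ≤ 2 * n) ∧ dMatched d a ∧ ¬ minimalMatched d a}
      set Cod := (Finset (Fin (2*h)) × (Fin (2*h) → Fin (2*h) × Fin (2*d+1)) ×
        (Fin (h-1) → Fin (2*n))) with hCod
      have hΦ : ∃ Φ : Bad → Cod, Function.Injective Φ := by
        refine ⟨fun x => (Sfree d x.1, fun i => encG d x.1 i,
          fun k => encV d n hn x.1 (k : ℕ)), ?_⟩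
        rintro ⟨a, ha, hma, hnma⟩ ⟨b, hb, hmb, hnmb⟩ hxy
        have hS : Sfree d a = Sfree d b := congrArg Prod.fst hxy
        have hg : (fun i => encG d a i) = (fun i => encG d b i) :=
          congrArg (fun p => p.2.1) hxy
        have hv : (fun k : Fin (h-1) => encV d n hn a (k : ℕ))
            = (fun k : Fin (h-1) => encV d n hn b (k : ℕ)) :=
          congrArg (fun p => p.2.2) hxy
        have main : ∀ m, ∀ i : Fin (2*h), key a i < m → a i = b i := by
          intro m
          induction m using Nat.strong_induction_on with
          | _ m ih =>
            intro i hkey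
            by_cases hfa : ∃ j, key a j < key a i ∧ a j ≤ a i + d ∧ a i ≤ a j + d
            · have hga := congrFun hg i
              rw [encG, dif_pos hfa] at hga
              have hspec := hfa.choose_spec
              by_cases hfb : ∃ j, key b j < key b i ∧ b j ≤ b i + d ∧ b i ≤ b j + d
              · rw [encG, dif_pos hfb] at hga
                have hspecb := hfb.choose_spec
                simp only [Prod.mk.injEq, Fin.mk.injEq] at hga
                obtain ⟨hj1, hoff⟩ := hga
                rw [← hj1] at hoff hspecb
                have hIH : a hfa.choose = b hfa.choose := ih (key a i) hkey _ hspec.1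
                omega
              · rw [encG, dif_neg hfb] at hga
                simp only [Prod.mk.injEq, Fin.mk.injEq] at hga
                have : hfa.choose = i := hga.1
                rw [this] at hspec
                omega
            · -- free case
              have hiS : i ∈ Sfree d a := mem_Sfree.mpr hfa
              have hcardS : (Sfree d a).card ≤ h - 1 := sfree_card_le d hh hma hnma
              have hklt : rankIn (Sfree d a) i < h - 1 := lt_of_lt_of_le (rankIn_lt hiS) hcardS
              have hvk := congrFun hv ⟨rankIn (Sfree d a) i, hklt⟩
              simp only at hvk
              have hexa : ∃ i', i' ∈ Sfree d a ∧ rankIn (Sfree d a) i' = rankIn (Sfree d a) i ∧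
                  1 ≤ a i' ∧ a i' ≤ 2*n := ⟨i, hiS, rfl, (ha i).1, (ha i).2⟩
              have hiSb : i ∈ Sfree d b := by rw [← hS]; exact hiS
              have hexb : ∃ i', i' ∈ Sfree d b ∧ rankIn (Sfree d b) i' = rankIn (Sfree d a) i ∧
                  1 ≤ b i' ∧ b i' ≤ 2*n := ⟨i, hiSb, by rw [← hS], (hb i).1, (hb i).2⟩
              rw [encV, dif_pos hexa, encV, dif_pos hexb] at hvk
              simp only [Fin.mk.injEq] at hvk
              have hca : hexa.choose = i := by
                have hs := hexa.choose_spec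
                exact rankIn_injOn hs.1 hiS hs.2.1
              have hcb : hexb.choose = i := by
                have hs := hexb.choose_spec
                apply rankIn_injOn hs.1 hiSb
                rw [hs.2.1, ← hS]
              rw [hca, hcb] at hvk
              have h1 := (ha i).1
              have h2 := (hb i).1
              omega
        exact Subtype.ext (funext fun i => main (key a i + 1) i (Nat.lt_succ_self _))
      obtain ⟨Φ, hinj⟩ := hΦ
      calc Nat.card Bad ≤ Nat.card Cod := Nat.card_le_card_of_injective Φ hinj
        _ = 2^(2*h) * (2*h*(2*d+1))^(2*h) * (2*n)^(h-1) := by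
          rw [hCod]
          simp only [Nat.card_eq_fintype_card, Fintype.card_prod, Fintype.card_finset,
            Fintype.card_fun, Fintype.card_fin]
          ring
    calc (Nat.card {a : Fin (2 * h) → ℕ //
          (∀ i, 1 ≤ a i ∧ a i ≤ 2 * n) ∧ dMatched d a ∧ ¬ minimalMatched d a} : ℝ)
        ≤ ((2^(2*h) * (2*h*(2*d+1))^(2*h) * (2*n)^(h-1) : ℕ) : ℝ) := by exact_mod_cast hineq
      _ = ((2^(2*h) * (2*h*(2*d+1))^(2*h) * 2^(h-1) : ℕ) : ℝ) * (n : ℝ) ^ (h-1) := by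
          push_cast
          ring
end
end

section
/- Suppose Assumption A(a) or A(b) holds. Then the limiting spectral distribution F_d of the sample autocovariance matrix Γ_n(X^{(d)}) is identical for the three parameter sequences (θ_0, θ_1, θ_2, θ_3, …), (θ_0, −θ_1, θ_2, −θ_3, …) (signs flipped at odd indices), and (−θ_0, θ_1, −θ_2, θ_3, …) (signs flipped at even indices). -/
open MeasureTheory Filter Finset ProbabilityTheory Topology
open scoped Classical ENNReal NNReal

noncomputable section

section AuxLSD

open Polynomial Matrix ProbabilityTheory TopologicalSpace


instance : TopologicalSpace (ZMod 2) := ⊥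
instance : DiscreteTopology (ZMod 2) := ⟨rfl⟩

abbrev RadSp : Type := ℤ → ZMod 2

noncomputable instance : MeasureSpace RadSp :=
  { (inferInstance : MeasurableSpace RadSp) with
    volume := Measure.addHaarMeasure (⊤ : PositiveCompacts RadSp) }

instance : (ℙ : Measure RadSp).IsAddLeftInvariant :=
  inferInstanceAs (Measure.addHaarMeasure (⊤ : PositiveCompacts RadSp)).IsAddLeftInvariant

instance : IsProbabilityMeasure (ℙ : Measure RadSp) := by
  constructor
  show Measure.addHaarMeasure (⊤ : PositiveCompacts RadSp) Set.univ = 1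
  rw [← PositiveCompacts.coe_top (α := RadSp)]
  exact Measure.addHaarMeasure_self

example : DiscreteMeasurableSpace (ZMod 2) := inferInstance

instance : IsFiniteMeasure (ℙ : Measure RadSp) :=
  ⟨by rw [measure_univ]; exact ENNReal.one_lt_top⟩

/-- cylinder set -/
def cylRS (S : Finset ℤ) (a : ℤ → ZMod 2) : Set RadSp := {ω | ∀ i ∈ S, ω i = a i}

lemma measurableSet_cylRS (S : Finset ℤ) (a : ℤ → ZMod 2) : MeasurableSet (cylRS S a) := by
  have : cylRS S a = ⋂ i ∈ S, (fun ω : RadSp => ω i) ⁻¹' {a i} := by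
    ext ω; simp [cylRS]
  rw [this]
  exact MeasurableSet.biInter (S.countable_toSet) fun i _ =>
    (measurable_pi_apply i) (measurableSet_singleton _)

lemma cylRS_const (S : Finset ℤ) (a b : ℤ → ZMod 2) : ℙ (cylRS S a) = ℙ (cylRS S b) := by
  have hpre : (fun ω : RadSp => (a - b) + ω) ⁻¹' (cylRS S a) = cylRS S b := by
    ext ω
    simp only [cylRS, Set.mem_preimage, Set.mem_setOf_eq, Pi.add_apply, Pi.sub_apply]
    constructor
    · intro h i hi
      have := h i hi
      have h2 : ∀ x y z : ZMod 2, x - y + z = x → z = y := by decide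
      exact h2 _ _ _ this
    · intro h i hi
      rw [h i hi]
      have h2 : ∀ x y : ZMod 2, x - y + y = x := by decide
      exact h2 _ _
  symm
  calc ℙ (cylRS S b) = ℙ ((fun ω : RadSp => (a - b) + ω) ⁻¹' (cylRS S a)) := by rw [hpre]
  _ = ℙ (cylRS S a) := measure_preimage_add _ _ _

lemma cylRS_measure (S : Finset ℤ) (a : ℤ → ZMod 2) :
    ℙ (cylRS S a) = (2 : ℝ≥0∞)⁻¹ ^ S.card := by
  induction S using Finset.induction_on generalizing a with
  | empty => simp [cylRS]
  | @insert i S hi ih =>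
    have hsplit : cylRS S a = cylRS (insert i S) a ∪ cylRS (insert i S)
        (Function.update a i (a i + 1)) := by
      ext ω
      simp only [cylRS, Set.mem_setOf_eq, Set.mem_union, Finset.mem_insert]
      constructor
      · intro h
        have hcase : ∀ x y : ZMod 2, x = y ∨ x = y + 1 := by decide
        rcases hcase (ω i) (a i) with hc | hc
        · left; rintro j (rfl | hj)
          exacts [hc, h j hj]
        · right; rintro j (rfl | hj)
          · rw [Function.update_self]; exact hc
          · rw [Function.update_of_ne (by rintro rfl; exact hi hj)]; exact h j hj
      · rintro (h | h) j hj
        · exact h j (Or.inr hj)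
        · rw [h j (Or.inr hj), Function.update_of_ne (by rintro rfl; exact hi hj)]
    have hdisj : Disjoint (cylRS (insert i S) a)
        (cylRS (insert i S) (Function.update a i (a i + 1))) := by
      rw [Set.disjoint_left]
      intro ω h1 h2
      have e1 := h1 i (Finset.mem_insert_self i S)
      have e2 := h2 i (Finset.mem_insert_self i S)
      rw [Function.update_self] at e2
      rw [e1] at e2
      have : ∀ x : ZMod 2, x ≠ x + 1 := by decide
      exact this _ e2
    have heq : ℙ (cylRS (insert i S) (Function.update a i (a i + 1)))
        = ℙ (cylRS (insert i S) a) := cylRS_const _ _ _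
    have hm := measure_union (μ := ℙ) hdisj (measurableSet_cylRS (insert i S) _)
    rw [← hsplit, ih a, heq] at hm
    have h2 : ℙ (cylRS (insert i S) a) + ℙ (cylRS (insert i S) a)
        = 2 * ℙ (cylRS (insert i S) a) := by ring
    rw [h2] at hm
    have : ℙ (cylRS (insert i S) a) = (2 : ℝ≥0∞)⁻¹ * ((2:ℝ≥0∞) * ℙ (cylRS (insert i S) a)) := by
      rw [← mul_assoc, ENNReal.inv_mul_cancel (by norm_num) (by norm_num), one_mul]
    rw [this, ← hm, Finset.card_insert_of_notMem hi, pow_succ, mul_comm]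

lemma biInter_measure (S : Finset ℤ) (B : ℤ → Set (ZMod 2)) :
    ℙ (⋂ i ∈ S, (fun ω : RadSp => ω i) ⁻¹' B i)
      = ∏ i ∈ S, (((B i).toFinset.card : ℝ≥0∞) * 2⁻¹) := by
  classical
  set F : Finset (ℤ → ZMod 2) :=
    (S.pi (fun i => (B i).toFinset)).image
      (fun b i => if h : i ∈ S then b i h else 0) with hF
  have hunion : (⋂ i ∈ S, (fun ω : RadSp => ω i) ⁻¹' B i) = ⋃ a ∈ F, cylRS S a := by
    ext ω
    simp only [Set.mem_iInter, Set.mem_preimage, Set.mem_iUnion, hF, Finset.mem_image,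
      Finset.mem_pi, Set.mem_toFinset, exists_prop]
    constructor
    · intro h
      refine ⟨fun i => if hi : i ∈ S then ω i else 0,
        ⟨⟨fun i _ => ω i, fun i hi => by simpa using h i hi, rfl⟩, fun i hi => by simp [hi]⟩⟩
    · rintro ⟨a, ⟨⟨b, hb, rfl⟩, ha⟩⟩ i hi
      have := ha i hi
      rw [this]
      simp only [dif_pos hi]
      have := hb i hi
      simpa using this
  have hdisjF : (F : Set (ℤ → ZMod 2)).PairwiseDisjoint (cylRS S) := by
    intro a ha a' ha' hne
    rw [Function.onFun, Set.disjoint_left]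
    intro ω h1 h2
    apply hne
    simp only [hF, Finset.coe_image, Set.mem_image, Finset.mem_coe, Finset.mem_pi] at ha ha'
    obtain ⟨b, hb, rfl⟩ := ha
    obtain ⟨b', hb', rfl⟩ := ha'
    funext j
    by_cases hj : j ∈ S
    · have e1 := h1 j hj
      have e2 := h2 j hj
      simp only [dif_pos hj] at e1 e2 ⊢
      rw [← e1, ← e2]
    · simp [hj]
  have hmeas := measure_biUnion_finset (μ := ℙ) hdisjF (fun a _ => measurableSet_cylRS S a)
  have hcardF : F.card = ∏ i ∈ S, (B i).toFinset.card := by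
    rw [hF, Finset.card_image_of_injOn, Finset.card_pi]
    intro b hb b' hb' heq
    simp only [Finset.mem_coe, Finset.mem_pi] at hb hb'
    funext i hi
    have := congrFun heq i
    simpa [dif_pos hi] using this
  rw [hunion, hmeas]
  have : ∀ a ∈ F, ℙ (cylRS S a) = (2 : ℝ≥0∞)⁻¹ ^ S.card := fun a _ => cylRS_measure S a
  rw [Finset.sum_congr rfl this, Finset.sum_const, Finset.prod_mul_distrib,
    Finset.prod_const, hcardF]
  rw [nsmul_eq_mul]
  push_cast
  ring

lemma coord_measure (t : ℤ) (B : Set (ZMod 2)) :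
    ℙ ((fun ω : RadSp => ω t) ⁻¹' B) = ((B.toFinset.card : ℝ≥0∞)) * 2⁻¹ := by
  have := biInter_measure {t} (fun _ => B)
  simpa using this

lemma iIndepFun_coords :
    ProbabilityTheory.iIndepFun (fun t (ω : RadSp) => ω t) ℙ := by
  rw [ProbabilityTheory.iIndepFun_iff_measure_inter_preimage_eq_mul]
  intro S sets _
  rw [biInter_measure S sets]
  exact Finset.prod_congr rfl fun i _ => (coord_measure i (sets i)).symm

/-- Rademacher sequence -/
noncomputable def radEps (t : ℤ) (ω : RadSp) : ℝ := if ω t = 0 then 1 else -1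

lemma radEps_eq (t : ℤ) :
    radEps t = (fun c : ZMod 2 => if c = 0 then (1:ℝ) else -1) ∘ (fun ω : RadSp => ω t) := rfl

lemma measurable_radEps (t : ℤ) : Measurable (radEps t) := by
  rw [radEps_eq]
  exact (Measurable.of_discrete).comp (measurable_pi_apply t)

lemma radEps_assumption : AssumptionAb radEps := by
  refine ⟨inferInstance, measurable_radEps, ?_, ⟨1, fun t ω => ?_⟩, fun t => ?_, fun t => ?_⟩
  · have := (iIndepFun_coords).comp (fun _ => fun c : ZMod 2 => if c = 0 then (1:ℝ) else -1)
      (fun _ => Measurable.of_discrete)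
    exact this
  · unfold radEps; split <;> norm_num
  · -- mean zero
    set A : Set RadSp := (fun ω : RadSp => ω t) ⁻¹' {0} with hA
    have hAmeas : MeasurableSet A := (measurable_pi_apply t) (measurableSet_singleton _)
    have hsplit : radEps t = fun ω => A.indicator (fun _ => (1:ℝ)) ω
        + Aᶜ.indicator (fun _ => (-1:ℝ)) ω := by
      funext ω
      by_cases h : ω t = 0 <;> simp [radEps, hA, h]
    have hPA : ℙ A = 2⁻¹ := by
      rw [hA, coord_measure]
      simp
    have hPAc : ℙ Aᶜ = 2⁻¹ := by
      have : Aᶜ = (fun ω : RadSp => ω t) ⁻¹' {1} := by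
        ext ω
        simp only [hA, Set.mem_compl_iff, Set.mem_preimage, Set.mem_singleton_iff]
        have : ∀ x : ZMod 2, ¬ x = 0 ↔ x = 1 := by decide
        exact this _
      rw [this, coord_measure]
      simp
    rw [hsplit, integral_add ((integrable_const (1:ℝ)).indicator hAmeas)
      ((integrable_const (-1:ℝ)).indicator hAmeas.compl),
      integral_indicator_const _ hAmeas, integral_indicator_const _ hAmeas.compl, measureReal_def, measureReal_def, hPA, hPAc]
    simp [ENNReal.toReal_inv]
  · -- variance one
    have : (fun ω => (radEps t ω) ^ 2) = fun _ => (1:ℝ) := by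
      funext ω
      unfold radEps; split <;> norm_num
    rw [this]
    simp

def sgnZ (t : ℤ) : ℝ := if Even t then 1 else -1

lemma sgnZ_add (a b : ℤ) : sgnZ (a + b) = sgnZ a * sgnZ b := by
  unfold sgnZ
  by_cases ha : Even a <;> by_cases hb : Even b <;>
    simp [Int.even_add, ha, hb]

lemma sgnZ_neg (a : ℤ) : sgnZ (-a) = sgnZ a := by simp [sgnZ]

lemma sgnZ_sub (a b : ℤ) : sgnZ (a - b) = sgnZ a * sgnZ b := by
  rw [sub_eq_add_neg, sgnZ_add, sgnZ_neg]

lemma sgnZ_sq (a : ℤ) : sgnZ a * sgnZ a = 1 := by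
  unfold sgnZ; split <;> norm_num

lemma sgnZ_natCast (k : ℕ) : sgnZ (k : ℤ) = (-1 : ℝ) ^ k := by
  unfold sgnZ
  by_cases h : Even k
  · rw [if_pos (by exact_mod_cast h), h.neg_one_pow]
  · rw [if_neg (by exact_mod_cast h), (Nat.not_even_iff_odd.mp h).neg_one_pow]

lemma sgnZ_abs (k : ℤ) : sgnZ |k| = sgnZ k := by
  rcases abs_choice k with h | h <;> rw [h]
  exact sgnZ_neg k

-- flipped process identities
lemma MAfin_flip {Ω : Type*} (θ : ℕ → ℝ) (d : ℕ) (ε : ℤ → Ω → ℝ) (ω : Ω) (r : ℝ) :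
    MAfin (fun j => r * (-1 : ℝ) ^ j * θ j) d (fun t ω' => sgnZ t * ε t ω') ω
      = fun t => r * sgnZ t * MAfin θ d ε ω t := by
  funext t
  unfold MAfin
  rw [Finset.mul_sum]
  refine Finset.sum_congr rfl fun k _ => ?_
  dsimp only
  have h1 : sgnZ (t - (k : ℤ)) = sgnZ t * (-1 : ℝ) ^ k := by
    rw [sgnZ_sub, sgnZ_natCast]
  rw [h1]
  have h2 : (-1 : ℝ) ^ k * (-1 : ℝ) ^ k = 1 := by
    rw [← pow_add, Even.neg_one_pow ⟨k, rfl⟩]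
  calc r * (-1:ℝ)^k * θ k * (sgnZ t * (-1:ℝ)^k * ε (t - k) ω)
      = ((-1:ℝ)^k * (-1:ℝ)^k) * (r * sgnZ t * (θ k * ε (t - k) ω)) := by ring
  _ = r * sgnZ t * (θ k * ε (t - k) ω) := by rw [h2, one_mul]

lemma sampleACV_flip (Y : ℤ → ℝ) (r : ℝ) (hr : r * r = 1) (n : ℕ) (k : ℤ) :
    sampleACV (fun t => r * sgnZ t * Y t) n k = sgnZ k * sampleACV Y n k := by
  unfold sampleACV
  rw [mul_left_comm (sgnZ k)]
  congr 1
  rw [Finset.mul_sum]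
  refine Finset.sum_congr rfl fun i _ => ?_
  dsimp only
  have h1 : sgnZ (i + |k|) = sgnZ i * sgnZ k := by rw [sgnZ_add, sgnZ_abs]
  rw [h1]
  calc r * sgnZ i * Y i * (r * (sgnZ i * sgnZ k) * Y (i + |k|))
      = (r * r) * (sgnZ i * sgnZ i) * (sgnZ k * (Y i * Y (i + |k|))) := by ring
  _ = sgnZ k * (Y i * Y (i + |k|)) := by rw [hr, sgnZ_sq, one_mul, one_mul]
lemma charpoly_conj_units {n : ℕ} (P A Q : Matrix (Fin n) (Fin n) ℝ)
    (hPQ : P * Q = 1) : (P * A * Q).charpoly = A.charpoly := by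
  have hmap : charmatrix (P * A * Q) = P.map C * charmatrix A * Q.map C := by
    rw [charmatrix, charmatrix]
    simp only [RingHom.mapMatrix_apply]
    rw [Matrix.mul_sub, Matrix.sub_mul, ← Matrix.map_mul, ← Matrix.map_mul]
    congr 1
    rw [scalar_apply, ← smul_one_eq_diagonal, Matrix.mul_smul, Matrix.mul_one,
      Matrix.smul_mul, ← Matrix.map_mul, hPQ, smul_one_eq_diagonal]
    rw [← smul_one_eq_diagonal]
    congr 1
    simp [Matrix.map_one]
  have hd : (P.map C).det * (Q.map C).det = 1 := by
    rw [← det_mul, ← Matrix.map_mul, hPQ]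
    simp
  rw [Matrix.charpoly, Matrix.charpoly, hmap, det_mul, det_mul]
  linear_combination A.charmatrix.det * hd

lemma charpoly_hermitian_eq_prod {n : ℕ} (A : Matrix (Fin n) (Fin n) ℝ) (hA : A.IsHermitian) :
    A.charpoly = ∏ i, (X - C (hA.eigenvalues i)) := by
  have hU : (hA.eigenvectorUnitary : Matrix (Fin n) (Fin n) ℝ) *
      (star (hA.eigenvectorUnitary : Matrix (Fin n) (Fin n) ℝ)) = 1 :=
    mem_unitaryGroup_iff.mp (hA.eigenvectorUnitary).2
  have h1 : A.charpoly = (Matrix.diagonal (RCLike.ofReal ∘ hA.eigenvalues)).charpoly := by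
    conv_lhs => rw [hA.spectral_theorem]
    exact charpoly_conj_units _ _ _ hU
  have h2 : (Matrix.diagonal (RCLike.ofReal ∘ hA.eigenvalues)).charpoly
      = ∏ i, (X - C (hA.eigenvalues i)) := by
    have hcm : charmatrix (Matrix.diagonal (RCLike.ofReal ∘ hA.eigenvalues))
        = Matrix.diagonal fun i => (X - C (hA.eigenvalues i)) := by
      ext i j
      by_cases h : i = j <;>
        simp [charmatrix_apply, Matrix.diagonal_apply, h, RCLike.ofReal_real_eq_id]
    rw [Matrix.charpoly, hcm, det_diagonal]
  rw [h1, h2]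

lemma eigenvalues_multiset_eq {n : ℕ} (A B : Matrix (Fin n) (Fin n) ℝ)
    (hA : A.IsHermitian) (hB : B.IsHermitian) (h : A.charpoly = B.charpoly) :
    (Finset.univ.val.map hA.eigenvalues) = (Finset.univ.val.map hB.eigenvalues) := by
  have hA' := charpoly_hermitian_eq_prod A hA
  have hB' := charpoly_hermitian_eq_prod B hB
  have key : ((Finset.univ.val.map hA.eigenvalues).map (fun a => X - C a)).prod
      = ((Finset.univ.val.map hB.eigenvalues).map (fun a => X - C a)).prod := by
    rw [Multiset.map_map, Multiset.map_map]
    have := hA' ▸ hB' ▸ h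
    simpa [Finset.prod] using this
  have := congrArg Polynomial.roots key
  rwa [Polynomial.roots_multiset_prod_X_sub_C, Polynomial.roots_multiset_prod_X_sub_C] at this

lemma isHermitian_sampleACVM (Y : ℤ → ℝ) (n : ℕ) : (sampleACVM Y n).IsHermitian := by
  refine Matrix.ext fun i j => ?_
  simp only [sampleACVM, Matrix.conjTranspose_apply, Matrix.of_apply, star]
  have : |((j : ℕ) : ℤ) - ((i : ℕ) : ℤ)| = |((i : ℕ) : ℤ) - ((j : ℕ) : ℤ)| := abs_sub_comm _ _
  unfold sampleACV
  rw [this]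

lemma ESD_conj {n : ℕ} (A : Matrix (Fin n) (Fin n) ℝ) (hA : A.IsHermitian) (s : Fin n → ℝ)
    (hs : ∀ i, s i * s i = 1) :
    ESD (Matrix.of fun i j => s i * A i j * s j) = ESD A := by
  set D : Matrix (Fin n) (Fin n) ℝ := Matrix.diagonal s with hD
  have hBD : (Matrix.of fun i j => s i * A i j * s j) = D * A * D := by
    refine Matrix.ext fun i j => ?_
    rw [Matrix.of_apply, Matrix.mul_diagonal, Matrix.diagonal_mul]
  have hDherm : D.IsHermitian := Matrix.isHermitian_diagonal s
  have hB : (D * A * D).IsHermitian := by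
    unfold Matrix.IsHermitian
    rw [Matrix.conjTranspose_mul, Matrix.conjTranspose_mul, hDherm.eq, hA.eq, ← Matrix.mul_assoc]
  have hDD : D * D = 1 := by
    rw [hD, Matrix.diagonal_mul_diagonal]
    have : (fun i => s i * s i) = fun _ => (1:ℝ) := funext hs
    rw [this, Matrix.diagonal_one]
  have hchar : (D * A * D).charpoly = A.charpoly := charpoly_conj_units D A D hDD
  have hmulti := eigenvalues_multiset_eq _ _ hB hA hchar
  rw [hBD, ESD, ESD, dif_pos hB, dif_pos hA]
  congr 1
  rw [Finset.sum_eq_multiset_sum, Finset.sum_eq_multiset_sum]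
  have hmm : ∀ (e : Fin n → ℝ), Multiset.map (fun i => Measure.dirac (e i)) Finset.univ.val
      = Multiset.map Measure.dirac (Multiset.map e Finset.univ.val) := fun e =>
    (Multiset.map_map Measure.dirac e Finset.univ.val).symm
  rw [hmm, hmm, hmulti]

lemma ESD_sampleACVM_flip (Y : ℤ → ℝ) (r : ℝ) (hr : r * r = 1) (n : ℕ) :
    ESD (sampleACVM (fun t => r * sgnZ t * Y t) n) = ESD (sampleACVM Y n) := by
  have hA := isHermitian_sampleACVM Y n
  have hent : sampleACVM (fun t => r * sgnZ t * Y t) n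
      = Matrix.of fun i j => (fun i : Fin n => sgnZ ((i : ℕ) : ℤ)) i
          * (sampleACVM Y n) i j * (fun i : Fin n => sgnZ ((i : ℕ) : ℤ)) j := by
    refine Matrix.ext fun i j => ?_
    simp only [sampleACVM, Matrix.of_apply]
    rw [sampleACV_flip Y r hr, sgnZ_sub]
    ring
  rw [hent, ESD_conj _ hA _ (fun i => sgnZ_sq _)]

lemma measure_eq_of_bcf (F G : Measure ℝ) [IsFiniteMeasure F] [IsFiniteMeasure G]
    (h : ∀ f : BoundedContinuousFunction ℝ ℝ, ∫ x, f x ∂F = ∫ x, f x ∂G) : F = G := by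
  apply ext_of_forall_lintegral_eq_of_IsFiniteMeasure
  intro f
  have lip : LipschitzWith 1 ((↑) : ℝ≥0 → ℝ) := isometry_subtype_coe.lipschitz
  set g : BoundedContinuousFunction ℝ ℝ := BoundedContinuousFunction.comp _ lip f with hg
  have h1 : ∫⁻ x, f x ∂F = ENNReal.ofReal (∫ x, g x ∂F) :=
    lintegral_coe_eq_integral (fun x => f x) (g.integrable F)
  have h2 : ∫⁻ x, f x ∂G = ENNReal.ofReal (∫ x, g x ∂G) :=
    lintegral_coe_eq_integral (fun x => f x) (g.integrable G)
  rw [h1, h2, h g]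

lemma sgnZ_pow_sq (t : ℤ) : sgnZ t ^ 2 = 1 := by
  rw [sq]; exact sgnZ_sq t

lemma assumptionAb_flip {Ω : Type} [MeasureSpace Ω] (ε : ℤ → Ω → ℝ) (h : AssumptionAb ε) :
    AssumptionAb (fun t ω => sgnZ t * ε t ω) := by
  obtain ⟨h1, h2, h3, ⟨C, hC⟩, h5, h6⟩ := h
  refine ⟨h1, fun t => (h2 t).const_mul _, ?_, ⟨C, fun t ω => ?_⟩, fun t => ?_, fun t => ?_⟩
  · exact h3.comp (fun t (x : ℝ) => sgnZ t * x) (fun t => measurable_const_mul _)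
  · rw [abs_mul]
    have : |sgnZ t| = 1 := by unfold sgnZ; split <;> norm_num
    rw [this, one_mul]; exact hC t ω
  · rw [integral_const_mul, h5 t, mul_zero]
  · have : (fun ω => (sgnZ t * ε t ω) ^ 2) = fun ω => (ε t ω) ^ 2 := by
      funext ω; rw [mul_pow, sgnZ_pow_sq, one_mul]
    rw [this]; exact h6 t

end AuxLSD

/-- Remark 2(iii): under Assumption A(a) or A(b), the LSD of `Γ_n(X^{(d)})` is identical
for the coefficient sequences `(θ_0, θ_1, θ_2, …)`, `(θ_0, -θ_1, θ_2, -θ_3, …)` and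
`(-θ_0, θ_1, -θ_2, θ_3, …)`. -/
theorem lsd_sign_flip_invariance (d : ℕ) (θ : ℕ → ℝ) (hθ0 : θ 0 ≠ 0)
    (F F' F'' : Measure ℝ)
    (hFprob : IsProbabilityMeasure F) (hF'prob : IsProbabilityMeasure F')
    (hF''prob : IsProbabilityMeasure F'')
    (hFLSD : ∀ (Ω : Type) [MeasureSpace Ω] (ε : ℤ → Ω → ℝ),
      AssumptionAa ε ∨ AssumptionAb ε →
      ∀ᵐ ω, WeakLim (fun n => ESD (sampleACVM (MAfin θ d ε ω) n)) F)
    (hF'LSD : ∀ (Ω : Type) [MeasureSpace Ω] (ε : ℤ → Ω → ℝ),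
      AssumptionAa ε ∨ AssumptionAb ε →
      ∀ᵐ ω, WeakLim
        (fun n => ESD (sampleACVM (MAfin (fun j => (-1 : ℝ) ^ j * θ j) d ε ω) n)) F')
    (hF''LSD : ∀ (Ω : Type) [MeasureSpace Ω] (ε : ℤ → Ω → ℝ),
      AssumptionAa ε ∨ AssumptionAb ε →
      ∀ᵐ ω, WeakLim
        (fun n => ESD (sampleACVM (MAfin (fun j => -((-1 : ℝ) ^ j) * θ j) d ε ω) n)) F'') :
    F' = F ∧ F'' = F := by
  have hAb : AssumptionAb radEps := radEps_assumption
  set ε' : ℤ → RadSp → ℝ := fun t ω => sgnZ t * radEps t ω with hε'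
  have hAb' : AssumptionAb ε' := assumptionAb_flip radEps hAb
  have h1 := hFLSD RadSp radEps (Or.inr hAb)
  have h2 := hF'LSD RadSp ε' (Or.inr hAb')
  have h3 := hF''LSD RadSp ε' (Or.inr hAb')
  haveI : (MeasureTheory.ae (ℙ : Measure RadSp)).NeBot :=
    ae_neBot.mpr (IsProbabilityMeasure.ne_zero _)
  obtain ⟨ω, ⟨hw1, hw2⟩, hw3⟩ := ((h1.and h2).and h3).exists
  set X : ℤ → ℝ := MAfin θ d radEps ω with hX
  have e1 : MAfin (fun j => (-1 : ℝ) ^ j * θ j) d ε' ω = fun t => 1 * sgnZ t * X t := by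
    have hco : (fun j => (-1 : ℝ) ^ j * θ j) = fun j => (1 : ℝ) * (-1 : ℝ) ^ j * θ j := by
      funext j; ring
    rw [hco, hε']
    exact MAfin_flip θ d radEps ω 1
  have e2 : MAfin (fun j => -((-1 : ℝ) ^ j) * θ j) d ε' ω = fun t => (-1) * sgnZ t * X t := by
    have hco : (fun j => -((-1 : ℝ) ^ j) * θ j) = fun j => (-1 : ℝ) * (-1 : ℝ) ^ j * θ j := by
      funext j; ring
    rw [hco, hε']
    exact MAfin_flip θ d radEps ω (-1)
  have s2 : (fun n => ESD (sampleACVM (MAfin (fun j => (-1 : ℝ) ^ j * θ j) d ε' ω) n))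
      = fun n => ESD (sampleACVM X n) := by
    funext n
    rw [e1, ESD_sampleACVM_flip X 1 (by norm_num) n]
  have s3 : (fun n => ESD (sampleACVM (MAfin (fun j => -((-1 : ℝ) ^ j) * θ j) d ε' ω) n))
      = fun n => ESD (sampleACVM X n) := by
    funext n
    rw [e2, ESD_sampleACVM_flip X (-1) (by norm_num) n]
  rw [s2] at hw2
  rw [s3] at hw3
  constructor
  · exact measure_eq_of_bcf F' F fun f => tendsto_nhds_unique (hw2 f) (hw1 f)
  · exact measure_eq_of_bcf F'' F fun f => tendsto_nhds_unique (hw3 f) (hw1 f)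
end
end

section
/- Let (θ_k)_{k≥0} be real numbers with Σ_{j≥0}|θ_j| < ∞, and for each n and d let Σ_{n,d} be the n×n Toeplitz matrix with (i,j) entry γ_{X^{(d)}}(|i−j|) and let \bar{Σ}_{n,d} be the n×n Toeplitz matrix with (i,j) entry γ_X(|i−j|) if |i−j| ≤ d and 0 otherwise. Then limsup_{n→∞} d_BL²(F^{Σ_{n,d}}, F^{\bar{Σ}_{n,d}}) ≤ 2 Σ_{j=0}^d ( Σ_{k=d−j+1}^∞ θ_k θ_{j+k} )². -/
open MeasureTheory Filter Finset ProbabilityTheory Topology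
open scoped Classical ENNReal NNReal

noncomputable section

section AuxSpectral
open Matrix

lemma trace_diag_conj {n : ℕ} (l m : Fin n → ℝ) (W : Matrix (Fin n) (Fin n) ℝ) :
    trace (diagonal l * W * diagonal m * Wᵀ) = ∑ i, ∑ j, l i * m j * (W i j)^2 := by
  simp only [Matrix.trace, Matrix.diag, Matrix.mul_apply, Matrix.diagonal_apply,
    Matrix.transpose_apply, ite_mul, zero_mul, Finset.sum_ite_eq, Finset.sum_ite_eq',
    Finset.mem_univ, if_true, mul_ite, mul_zero]
  refine Finset.sum_congr rfl fun i _ => Finset.sum_congr rfl fun j _ => by ring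

lemma row_sum_sq {n : ℕ} (W : Matrix (Fin n) (Fin n) ℝ) (hW : W ∈ Matrix.unitaryGroup (Fin n) ℝ)
    (i : Fin n) : ∑ j, (W i j)^2 = 1 := by
  have h := Matrix.mem_unitaryGroup_iff.mp hW
  have := congrFun (congrFun h i) i
  simp only [Matrix.mul_apply, Matrix.star_apply, Matrix.conjTranspose_apply, star_trivial,
    Matrix.one_apply_eq] at this
  simpa [sq] using this

lemma col_sum_sq {n : ℕ} (W : Matrix (Fin n) (Fin n) ℝ) (hW : W ∈ Matrix.unitaryGroup (Fin n) ℝ)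
    (j : Fin n) : ∑ i, (W i j)^2 = 1 := by
  have h := Matrix.mem_unitaryGroup_iff'.mp hW
  have := congrFun (congrFun h j) j
  simp only [Matrix.mul_apply, Matrix.star_apply, Matrix.conjTranspose_apply, star_trivial,
    Matrix.one_apply_eq] at this
  simpa [sq] using this

lemma unitary_cancel₁ {n : ℕ} (u : Matrix.unitaryGroup (Fin n) ℝ) (X : Matrix (Fin n) (Fin n) ℝ) :
    (u : Matrix (Fin n) (Fin n) ℝ) * (star (u : Matrix (Fin n) (Fin n) ℝ) * X) = X := by
  rw [← Matrix.mul_assoc, Matrix.mem_unitaryGroup_iff.mp u.2, Matrix.one_mul]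

lemma unitary_cancel₂ {n : ℕ} (u : Matrix.unitaryGroup (Fin n) ℝ) (X : Matrix (Fin n) (Fin n) ℝ) :
    star (u : Matrix (Fin n) (Fin n) ℝ) * ((u : Matrix (Fin n) (Fin n) ℝ) * X) = X := by
  rw [← Matrix.mul_assoc, Matrix.mem_unitaryGroup_iff'.mp u.2, Matrix.one_mul]

lemma diag_real {n : ℕ} (l : Fin n → ℝ) :
    Matrix.diagonal (RCLike.ofReal ∘ l) = Matrix.diagonal l := by
  congr 1

lemma trace_AB {n : ℕ} (A B : Matrix (Fin n) (Fin n) ℝ) (hA : A.IsHermitian) (hB : B.IsHermitian) :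
    ∑ i, ∑ j, A i j * B i j = ∑ i, ∑ j, hA.eigenvalues i * hB.eigenvalues j *
      ((star (hA.eigenvectorUnitary : Matrix (Fin n) (Fin n) ℝ) *
        (hB.eigenvectorUnitary : Matrix (Fin n) (Fin n) ℝ)) i j)^2 := by
  have hcanA : (hA.eigenvectorUnitary : Matrix (Fin n) (Fin n) ℝ) *
      star (hA.eigenvectorUnitary : Matrix (Fin n) (Fin n) ℝ) = 1 :=
    Matrix.mem_unitaryGroup_iff.mp hA.eigenvectorUnitary.2
  have hcanA' : star (hA.eigenvectorUnitary : Matrix (Fin n) (Fin n) ℝ) *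
      (hA.eigenvectorUnitary : Matrix (Fin n) (Fin n) ℝ) = 1 :=
    Matrix.mem_unitaryGroup_iff'.mp hA.eigenvectorUnitary.2
  have h1 : ∑ i, ∑ j, A i j * B i j = Matrix.trace (A * B) := by
    rw [Matrix.trace]
    simp only [Matrix.diag, Matrix.mul_apply]
    rw [Finset.sum_comm]
    refine Finset.sum_congr rfl fun i _ => Finset.sum_congr rfl fun j _ => ?_
    rw [show A j i = A i j from congrFun (congrFun hA.symm j) i, mul_comm]
  have hWt : (star (hA.eigenvectorUnitary : Matrix (Fin n) (Fin n) ℝ) *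
      (hB.eigenvectorUnitary : Matrix (Fin n) (Fin n) ℝ))ᵀ =
      star (hB.eigenvectorUnitary : Matrix (Fin n) (Fin n) ℝ) *
      (hA.eigenvectorUnitary : Matrix (Fin n) (Fin n) ℝ) := by
    ext i j
    simp [Matrix.mul_apply, Matrix.star_apply, Matrix.conjTranspose_apply, mul_comm]
  have h2 : A * B = (hA.eigenvectorUnitary : Matrix (Fin n) (Fin n) ℝ) *
      ((Matrix.diagonal hA.eigenvalues *
        (star (hA.eigenvectorUnitary : Matrix (Fin n) (Fin n) ℝ) *
          (hB.eigenvectorUnitary : Matrix (Fin n) (Fin n) ℝ)) *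
        Matrix.diagonal hB.eigenvalues *
        (star (hA.eigenvectorUnitary : Matrix (Fin n) (Fin n) ℝ) *
          (hB.eigenvectorUnitary : Matrix (Fin n) (Fin n) ℝ))ᵀ) *
        star (hA.eigenvectorUnitary : Matrix (Fin n) (Fin n) ℝ)) := by
    rw [hWt]
    nth_rewrite 1 [hA.spectral_theorem, hB.spectral_theorem]
    rw [diag_real, diag_real]
    simp only [Matrix.mul_assoc, Unitary.conjStarAlgAut_apply]
    rw [hcanA, Matrix.mul_one]
  rw [h1, h2, Matrix.trace_mul_comm,
    Matrix.mul_assoc _ (star (hA.eigenvectorUnitary : Matrix (Fin n) (Fin n) ℝ))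
      (hA.eigenvectorUnitary : Matrix (Fin n) (Fin n) ℝ),
    hcanA', Matrix.mul_one, trace_diag_conj]

lemma eig_lip_bound {n : ℕ} (A B : Matrix (Fin n) (Fin n) ℝ)
    (hA : A.IsHermitian) (hB : B.IsHermitian) (f : ℝ → ℝ) (hf : LipschitzWith 1 f) :
    |(∑ i, f (hA.eigenvalues i)) - ∑ i, f (hB.eigenvalues i)| ≤
      Real.sqrt ((n : ℝ) * ∑ i, ∑ j, (A i j - B i j)^2) := by
  set W : Matrix (Fin n) (Fin n) ℝ :=
    star (hA.eigenvectorUnitary : Matrix (Fin n) (Fin n) ℝ) *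
      (hB.eigenvectorUnitary : Matrix (Fin n) (Fin n) ℝ) with hWdef
  have hW : W ∈ Matrix.unitaryGroup (Fin n) ℝ :=
    mul_mem (Unitary.star_mem hA.eigenvectorUnitary.2) hB.eigenvectorUnitary.2
  set l := hA.eigenvalues
  set m := hB.eigenvalues
  have hrow : ∀ i, ∑ j, (W i j)^2 = 1 := row_sum_sq W hW
  have hcol : ∀ j, ∑ i, (W i j)^2 = 1 := col_sum_sq W hW
  -- trace identities
  have hAB : ∑ i, ∑ j, A i j * B i j = ∑ i, ∑ j, l i * m j * (W i j)^2 := trace_AB A B hA hB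
  have hID : ∀ (C : Matrix (Fin n) (Fin n) ℝ) (hC : C.IsHermitian),
      ∑ i, ∑ j, C i j * C i j = ∑ i, (hC.eigenvalues i)^2 := by
    intro C hC
    rw [trace_AB C C hC hC, Matrix.mem_unitaryGroup_iff'.mp hC.eigenvectorUnitary.2]
    simp [Matrix.one_apply, sq, Finset.mul_sum]
  have hS2 : ∑ i, ∑ j, (W i j)^2 * (l i - m j)^2 = ∑ i, ∑ j, (A i j - B i j)^2 := by
    have e1 : ∑ i, ∑ j, (W i j)^2 * (l i - m j)^2 =
        (∑ i, ∑ j, (l i)^2 * (W i j)^2) - 2 * (∑ i, ∑ j, l i * m j * (W i j)^2)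
          + ∑ i, ∑ j, (m j)^2 * (W i j)^2 := by
      simp only [Finset.mul_sum, ← Finset.sum_sub_distrib, ← Finset.sum_add_distrib]
      refine Finset.sum_congr rfl fun i _ => Finset.sum_congr rfl fun j _ => by ring
    have e2 : ∑ i, ∑ j, (A i j - B i j)^2 =
        (∑ i, ∑ j, A i j * A i j) - 2 * (∑ i, ∑ j, A i j * B i j)
          + ∑ i, ∑ j, B i j * B i j := by
      simp only [Finset.mul_sum, ← Finset.sum_sub_distrib, ← Finset.sum_add_distrib]
      refine Finset.sum_congr rfl fun i _ => Finset.sum_congr rfl fun j _ => by ring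
    have e3 : ∑ i, ∑ j, (l i)^2 * (W i j)^2 = ∑ i, ∑ j, A i j * A i j := by
      rw [hID A hA]
      refine Finset.sum_congr rfl fun i _ => ?_
      rw [← Finset.mul_sum, hrow i, mul_one]
    have e4 : ∑ i, ∑ j, (m j)^2 * (W i j)^2 = ∑ i, ∑ j, B i j * B i j := by
      rw [hID B hB, Finset.sum_comm]
      refine Finset.sum_congr rfl fun j _ => ?_
      rw [← Finset.mul_sum, hcol j, mul_one]
    rw [e1, e2, e3, e4, hAB]
  -- rewrite the sums of f over eigenvalues
  have hL : (∑ i, f (l i)) = ∑ i, ∑ j, (W i j)^2 * f (l i) := by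
    refine Finset.sum_congr rfl fun i _ => ?_
    rw [← Finset.sum_mul, hrow i, one_mul]
  have hM : (∑ j, f (m j)) = ∑ i, ∑ j, (W i j)^2 * f (m j) := by
    rw [Finset.sum_comm]
    refine Finset.sum_congr rfl fun j _ => ?_
    rw [← Finset.sum_mul, hcol j, one_mul]
  rw [hL, hM, ← Finset.sum_sub_distrib]
  simp_rw [← Finset.sum_sub_distrib, ← mul_sub]
  -- triangle inequality and Lipschitz
  have step1 : |∑ i, ∑ j, (W i j)^2 * (f (l i) - f (m j))| ≤
      ∑ i, ∑ j, (W i j)^2 * |l i - m j| := by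
    refine (Finset.abs_sum_le_sum_abs _ _).trans ?_
    refine Finset.sum_le_sum fun i _ => ?_
    refine (Finset.abs_sum_le_sum_abs _ _).trans ?_
    refine Finset.sum_le_sum fun j _ => ?_
    rw [abs_mul, abs_of_nonneg (sq_nonneg _)]
    refine mul_le_mul_of_nonneg_left ?_ (sq_nonneg _)
    have := hf.dist_le_mul (l i) (m j)
    simpa [Real.dist_eq] using this
  refine step1.trans ?_
  -- Cauchy–Schwarz
  have hT0 : (0:ℝ) ≤ ∑ i, ∑ j, (W i j)^2 * |l i - m j| :=
    Finset.sum_nonneg fun i _ => Finset.sum_nonneg fun j _ =>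
      mul_nonneg (sq_nonneg _) (abs_nonneg _)
  rw [← Real.sqrt_sq hT0]
  refine Real.sqrt_le_sqrt ?_
  have cs : (∑ x : Fin n × Fin n, (|W x.1 x.2|) * (|W x.1 x.2| * |l x.1 - m x.2|))^2 ≤
      (∑ x : Fin n × Fin n, |W x.1 x.2|^2) *
        ∑ x : Fin n × Fin n, (|W x.1 x.2| * |l x.1 - m x.2|)^2 :=
    Finset.sum_mul_sq_le_sq_mul_sq _ _ _
  have rew1 : ∑ x : Fin n × Fin n, (|W x.1 x.2|) * (|W x.1 x.2| * |l x.1 - m x.2|) =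
      ∑ i, ∑ j, (W i j)^2 * |l i - m j| := by
    rw [← Finset.sum_product']
    refine Finset.sum_congr rfl fun x _ => by
      rw [← mul_assoc, ← sq, sq_abs]
  have rew2 : ∑ x : Fin n × Fin n, |W x.1 x.2|^2 = (n : ℝ) := by
    have h9 : (∑ i, ∑ j, (W i j)^2) = (n : ℝ) := by
      rw [show (∑ i, ∑ j, (W i j)^2) = ∑ i : Fin n, (1:ℝ) from
        Finset.sum_congr rfl fun i _ => hrow i]
      simp
    rw [← h9, ← Finset.sum_product']
    exact Finset.sum_congr rfl fun x _ => sq_abs _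
  have rew3 : ∑ x : Fin n × Fin n, (|W x.1 x.2| * |l x.1 - m x.2|)^2 =
      ∑ i, ∑ j, (W i j)^2 * (l i - m j)^2 := by
    rw [← Finset.sum_product']
    refine Finset.sum_congr rfl fun x _ => by
      rw [mul_pow, sq_abs, sq_abs]
  rw [rew1, rew2, rew3] at cs
  calc (∑ i, ∑ j, (W i j)^2 * |l i - m j|)^2
      ≤ (n : ℝ) * ∑ i, ∑ j, (W i j)^2 * (l i - m j)^2 := cs
    _ = (n : ℝ) * ∑ i, ∑ j, (A i j - B i j)^2 := by rw [hS2]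

end AuxSpectral

section AuxMeasure

lemma integrable_bdd_dirac (f : ℝ → ℝ) (hfc : Continuous f) (hb : ∀ x, |f x| ≤ 1) (a : ℝ) :
    Integrable f (Measure.dirac a) :=
  (integrable_const (1:ℝ)).mono' hfc.aestronglyMeasurable
    (Filter.Eventually.of_forall fun x => by simpa using hb x)

lemma integral_ESD {n : ℕ} {A : Matrix (Fin n) (Fin n) ℝ} (hA : A.IsHermitian) (f : ℝ → ℝ)
    (hfc : Continuous f) (hb : ∀ x, |f x| ≤ 1) :
    ∫ x, f x ∂(ESD A) = (n : ℝ)⁻¹ * ∑ i, f (hA.eigenvalues i) := by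
  rw [ESD, dif_pos hA, integral_smul_measure,
    integral_finset_sum_measure (fun i _ => integrable_bdd_dirac f hfc hb _)]
  simp [integral_dirac, smul_eq_mul]

lemma dBL_ESD_sq_le {n : ℕ} (A B : Matrix (Fin n) (Fin n) ℝ)
    (hA : A.IsHermitian) (hB : B.IsHermitian) :
    dBL (ESD A) (ESD B) ^ 2 ≤ (n : ℝ)⁻¹ * ∑ i, ∑ j, (A i j - B i j)^2 := by
  set S : ℝ := ∑ i, ∑ j, (A i j - B i j)^2 with hSdef
  have hS0 : 0 ≤ S :=
    Finset.sum_nonneg fun i _ => Finset.sum_nonneg fun j _ => sq_nonneg _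
  set c : ℝ := Real.sqrt ((n : ℝ)⁻¹ * S) with hcdef
  have harith : (n : ℝ)⁻¹ * Real.sqrt ((n : ℝ) * S) = c := by
    rw [hcdef]
    nth_rewrite 1 [show ((n:ℝ))⁻¹ = Real.sqrt ((n:ℝ)⁻¹ * (n:ℝ)⁻¹) from
      (Real.sqrt_mul_self (inv_nonneg.2 (Nat.cast_nonneg n))).symm]
    rw [← Real.sqrt_mul (mul_nonneg (inv_nonneg.2 (Nat.cast_nonneg n))
      (inv_nonneg.2 (Nat.cast_nonneg n))) _]
    congr 1
    rcases eq_or_ne (n:ℝ) 0 with h | h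
    · simp [h]
    · field_simp
  have hub : ∀ r ∈ { r : ℝ | ∃ f : ℝ → ℝ, (∀ x, |f x| ≤ 1) ∧ LipschitzWith 1 f ∧
      r = |(∫ x, f x ∂(ESD A)) - (∫ x, f x ∂(ESD B))| }, r ≤ c := by
    rintro r ⟨f, hb, hlip, rfl⟩
    rw [integral_ESD hA f hlip.continuous hb, integral_ESD hB f hlip.continuous hb, ← mul_sub,
      abs_mul, abs_of_nonneg (inv_nonneg.2 (Nat.cast_nonneg n))]
    calc (n:ℝ)⁻¹ * |(∑ i, f (hA.eigenvalues i)) - ∑ i, f (hB.eigenvalues i)|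
        ≤ (n:ℝ)⁻¹ * Real.sqrt ((n : ℝ) * S) :=
          mul_le_mul_of_nonneg_left (eig_lip_bound A B hA hB f hlip)
            (inv_nonneg.2 (Nat.cast_nonneg n))
      _ = c := harith
  have h1 : dBL (ESD A) (ESD B) ≤ c := Real.sSup_le hub (Real.sqrt_nonneg _)
  have hmem : (0:ℝ) ∈ { r : ℝ | ∃ f : ℝ → ℝ, (∀ x, |f x| ≤ 1) ∧ LipschitzWith 1 f ∧
      r = |(∫ x, f x ∂(ESD A)) - (∫ x, f x ∂(ESD B))| } := by
    refine ⟨fun _ => 0, fun x => by simp, (LipschitzWith.const (0:ℝ)).weaken zero_le_one, by simp⟩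
  have h2 : 0 ≤ dBL (ESD A) (ESD B) := le_csSup ⟨c, hub⟩ hmem
  calc dBL (ESD A) (ESD B) ^ 2 ≤ c ^ 2 := pow_le_pow_left₀ h2 h1 2
    _ = (n : ℝ)⁻¹ * S := Real.sq_sqrt (mul_nonneg (inv_nonneg.2 (Nat.cast_nonneg n)) hS0)

lemma part_bound {n d : ℕ} (g : ℕ → ℝ) (hg : ∀ m, 0 ≤ g m) (i : Fin n)
    (s : Finset (Fin n))
    (hinj : ∀ a ∈ s, ∀ b ∈ s,
      ((((i:ℕ):ℤ) - ((a:ℕ):ℤ)).natAbs = (((i:ℕ):ℤ) - ((b:ℕ):ℤ)).natAbs) → a = b) :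
    ∑ j ∈ s, (if (((i:ℕ):ℤ) - ((j:ℕ):ℤ)).natAbs ≤ d then
        g ((((i:ℕ):ℤ) - ((j:ℕ):ℤ)).natAbs) else 0)
      ≤ ∑ m ∈ Finset.range (d+1), g m := by
  have e1 : ∑ j ∈ s, (if (((i:ℕ):ℤ) - ((j:ℕ):ℤ)).natAbs ≤ d then
        g ((((i:ℕ):ℤ) - ((j:ℕ):ℤ)).natAbs) else 0)
      = ∑ j ∈ s.filter (fun j : Fin n => (((i:ℕ):ℤ) - ((j:ℕ):ℤ)).natAbs ≤ d),
        g ((((i:ℕ):ℤ) - ((j:ℕ):ℤ)).natAbs) := (Finset.sum_filter _ _).symm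
  rw [e1]
  have e2 : ∑ j ∈ s.filter (fun j : Fin n => (((i:ℕ):ℤ) - ((j:ℕ):ℤ)).natAbs ≤ d),
        g ((((i:ℕ):ℤ) - ((j:ℕ):ℤ)).natAbs)
      = ∑ m ∈ (s.filter (fun j : Fin n => (((i:ℕ):ℤ) - ((j:ℕ):ℤ)).natAbs ≤ d)).image
          (fun j : Fin n => (((i:ℕ):ℤ) - ((j:ℕ):ℤ)).natAbs), g m :=
    (Finset.sum_image (fun a ha b hb h =>
      hinj a (Finset.mem_filter.mp ha).1 b (Finset.mem_filter.mp hb).1 h)).symm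
  rw [e2]
  refine Finset.sum_le_sum_of_subset_of_nonneg ?_ (fun m _ _ => hg m)
  intro m hm
  rw [Finset.mem_image] at hm
  obtain ⟨j, hj, rfl⟩ := hm
  exact Finset.mem_range.mpr (Nat.lt_succ_of_le (Finset.mem_filter.mp hj).2)

lemma row_bound {n d : ℕ} (g : ℕ → ℝ) (hg : ∀ m, 0 ≤ g m) (i : Fin n) :
    ∑ j : Fin n, (if (((i:ℕ):ℤ) - ((j:ℕ):ℤ)).natAbs ≤ d then
        g ((((i:ℕ):ℤ) - ((j:ℕ):ℤ)).natAbs) else 0)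
      ≤ 2 * ∑ m ∈ Finset.range (d+1), g m := by
  rw [← Finset.sum_filter_add_sum_filter_not Finset.univ (fun j : Fin n => (j:ℕ) ≤ (i:ℕ)),
    two_mul]
  gcongr
  · refine part_bound g hg i _ fun a ha b hb h => ?_
    have ha' := (Finset.mem_filter.mp ha).2
    have hb' := (Finset.mem_filter.mp hb).2
    have : (a:ℕ) = (b:ℕ) := by omega
    exact Fin.ext this
  · refine part_bound g hg i _ fun a ha b hb h => ?_
    have ha' := (Finset.mem_filter.mp ha).2
    have hb' := (Finset.mem_filter.mp hb).2
    simp only [Finset.mem_filter, not_le] at ha' hb'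
    have : (a:ℕ) = (b:ℕ) := by omega
    exact Fin.ext this

lemma theta_summable {θ : ℕ → ℝ} (hBb : Summable fun j => |θ j|) (m : ℕ) :
    Summable fun k => θ k * θ (m + k) := by
  have hM : ∀ k, |θ k| ≤ ∑' j, |θ j| := fun k => Summable.le_tsum hBb k fun _ _ => abs_nonneg _
  refine Summable.of_abs ?_
  refine Summable.of_nonneg_of_le (fun k => abs_nonneg _) (fun k => ?_)
    (hBb.mul_right (∑' j, |θ j|))
  rw [abs_mul]
  exact mul_le_mul_of_nonneg_left (hM _) (abs_nonneg _)

lemma gamma_diff {θ : ℕ → ℝ} (hBb : Summable fun j => |θ j|) {d m : ℕ} (hm : m ≤ d) :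
    gammaFin θ d m - gammaInf θ m
      = -(∑' k : ℕ, θ (d - m + 1 + k) * θ (m + (d - m + 1 + k))) := by
  have hsplit := Summable.sum_add_tsum_nat_add (f := fun k => θ k * θ (m + k)) (d - m + 1)
    (theta_summable hBb m)
  have htail : (∑' k : ℕ, θ (k + (d - m + 1)) * θ (m + (k + (d - m + 1))))
      = ∑' k : ℕ, θ (d - m + 1 + k) * θ (m + (d - m + 1 + k)) :=
    tsum_congr fun k => by rw [Nat.add_comm k (d - m + 1)]
  rw [gammaFin, if_pos hm, gammaInf, ← hsplit, htail]
  ring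

end AuxMeasure

/-- For the deterministic Toeplitz matrices `Σ_{n,d}` (entries `γ_{X^{(d)}}(|i-j|)`) and
`Σ̄_{n,d}` (entries `γ_X(|i-j|)` for `|i-j| ≤ d`, `0` otherwise),
`limsup_n d_BL²(F^{Σ_{n,d}}, F^{Σ̄_{n,d}}) ≤ 2 ∑_{j=0}^d (∑_{k=d-j+1}^∞ θ_k θ_{j+k})²`. -/
theorem limsup_dBL_toeplitz (θ : ℕ → ℝ) (hθ0 : θ 0 ≠ 0)
    (hBb : Summable fun j => |θ j|) (d : ℕ) :
    Filter.limsup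
        (fun n : ℕ =>
          dBL
            (ESD (Matrix.of fun i j : Fin n =>
              gammaFin θ d ((((i : ℕ) : ℤ) - ((j : ℕ) : ℤ)).natAbs)))
            (ESD (Matrix.of fun i j : Fin n =>
              if (((i : ℕ) : ℤ) - ((j : ℕ) : ℤ)).natAbs ≤ d then
                gammaInf θ ((((i : ℕ) : ℤ) - ((j : ℕ) : ℤ)).natAbs)
              else 0)) ^ 2)
        atTop
      ≤ 2 * ∑ j ∈ Finset.range (d + 1),
          (∑' k : ℕ, θ (d - j + 1 + k) * θ (j + (d - j + 1 + k))) ^ 2 := by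
  
  set T : ℕ → ℝ := fun j => ∑' k : ℕ, θ (d - j + 1 + k) * θ (j + (d - j + 1 + k)) with hTdef
  set C : ℝ := 2 * ∑ j ∈ Finset.range (d + 1), T j ^ 2 with hCdef
  have hC0 : 0 ≤ C :=
    mul_nonneg (by norm_num) (Finset.sum_nonneg fun j _ => sq_nonneg _)
  have key : ∀ n : ℕ,
      dBL
        (ESD (Matrix.of fun i j : Fin n =>
          gammaFin θ d ((((i : ℕ) : ℤ) - ((j : ℕ) : ℤ)).natAbs)))
        (ESD (Matrix.of fun i j : Fin n =>
          if (((i : ℕ) : ℤ) - ((j : ℕ) : ℤ)).natAbs ≤ d then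
            gammaInf θ ((((i : ℕ) : ℤ) - ((j : ℕ) : ℤ)).natAbs)
          else 0)) ^ 2 ≤ C := by
    intro n
    set A : Matrix (Fin n) (Fin n) ℝ := Matrix.of fun i j : Fin n =>
      gammaFin θ d ((((i : ℕ) : ℤ) - ((j : ℕ) : ℤ)).natAbs) with hAdef
    set B : Matrix (Fin n) (Fin n) ℝ := Matrix.of fun i j : Fin n =>
      if (((i : ℕ) : ℤ) - ((j : ℕ) : ℤ)).natAbs ≤ d then
        gammaInf θ ((((i : ℕ) : ℤ) - ((j : ℕ) : ℤ)).natAbs) else 0 with hBdef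
    have hermA : A.IsHermitian := by
      ext i j
      simp only [hAdef, Matrix.conjTranspose_apply, Matrix.of_apply, star_trivial]
      rw [show ((((j : ℕ) : ℤ) - ((i : ℕ) : ℤ)).natAbs) =
        ((((i : ℕ) : ℤ) - ((j : ℕ) : ℤ)).natAbs) from by omega]
    have hermB : B.IsHermitian := by
      ext i j
      simp only [hBdef, Matrix.conjTranspose_apply, Matrix.of_apply, star_trivial]
      rw [show ((((j : ℕ) : ℤ) - ((i : ℕ) : ℤ)).natAbs) =
        ((((i : ℕ) : ℤ) - ((j : ℕ) : ℤ)).natAbs) from by omega]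
    refine (dBL_ESD_sq_le A B hermA hermB).trans ?_
    have hentry : ∀ i j : Fin n, (A i j - B i j)^2 =
        (if (((i : ℕ) : ℤ) - ((j : ℕ) : ℤ)).natAbs ≤ d then
          T ((((i : ℕ) : ℤ) - ((j : ℕ) : ℤ)).natAbs) ^ 2 else 0) := by
      intro i j
      by_cases hm : (((i : ℕ) : ℤ) - ((j : ℕ) : ℤ)).natAbs ≤ d
      · rw [if_pos hm]
        have := gamma_diff hBb hm
        simp only [hAdef, hBdef, Matrix.of_apply, if_pos hm]
        rw [this]
        ring
      · rw [if_neg hm]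
        simp only [hAdef, hBdef, Matrix.of_apply, if_neg hm, gammaFin, if_neg hm]
        ring
    have hsum : ∑ i, ∑ j, (A i j - B i j)^2 ≤ (n : ℝ) * C := by
      have hrow : ∀ i : Fin n, ∑ j, (A i j - B i j)^2 ≤ C := by
        intro i
        rw [hCdef]
        calc ∑ j, (A i j - B i j)^2
            = ∑ j : Fin n, (if (((i : ℕ) : ℤ) - ((j : ℕ) : ℤ)).natAbs ≤ d then
                T ((((i : ℕ) : ℤ) - ((j : ℕ) : ℤ)).natAbs) ^ 2 else 0) :=
              Finset.sum_congr rfl fun j _ => hentry i j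
          _ ≤ 2 * ∑ m ∈ Finset.range (d+1), T m ^ 2 :=
              row_bound (fun m => T m ^ 2) (fun m => sq_nonneg _) i
      calc ∑ i, ∑ j, (A i j - B i j)^2 ≤ ∑ _i : Fin n, C := Finset.sum_le_sum fun i _ => hrow i
        _ = (n : ℝ) * C := by simp [mul_comm]
    calc (n : ℝ)⁻¹ * ∑ i, ∑ j, (A i j - B i j)^2
        ≤ (n : ℝ)⁻¹ * ((n : ℝ) * C) :=
          mul_le_mul_of_nonneg_left hsum (inv_nonneg.2 (Nat.cast_nonneg n))
      _ = ((n : ℝ)⁻¹ * (n : ℝ)) * C := by ring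
      _ ≤ 1 * C := by
          refine mul_le_mul_of_nonneg_right ?_ hC0
          rcases eq_or_ne (n : ℝ) 0 with h | h
          · simp [h]
          · rw [inv_mul_cancel₀ h]
      _ = C := one_mul C
  refine Filter.limsup_le_of_le ?_ (Filter.Eventually.of_forall key)
  exact Filter.isCoboundedUnder_le_of_le atTop (x := 0) fun n => sq_nonneg _
end
end
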